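/- arXiv:1407.6671 — 9 statements merged into one kernel-verified Lean document; each statement's English description precedes it below -/
import Mathlib

section
/- Let X be a locally Polish space. Then the set F(X) of closed subsets of X, endowed with the Effros Borel σ-algebra, is a standard Borel space. -/
open TopologicalSpace

/-- A locally Polish space is a topological space with a countable basis of open sets
which are Polish spaces in the relative topology. -/
def LocallyPolish (X : Type*) [TopologicalSpace X] : Prop :=
  ∃ B : Set (Set X), B.Countable ∧ IsTopologicalBasis B ∧ ∀ U ∈ B, PolishSpace U

/-- The Effros Borel σ-algebra on the space of closed subsets of a topological space:
the σ-algebra generated by the sets `{F : F ∩ U ≠ ∅}` for `U` open. -/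
instance effrosMeasurableSpace (X : Type*) [TopologicalSpace X] :
    MeasurableSpace (Closeds X) :=
  MeasurableSpace.generateFrom
    {S : Set (Closeds X) | ∃ U : Set X, IsOpen U ∧
      S = {F : Closeds X | ((F : Set X) ∩ U).Nonempty}}

section Aux

open MeasureTheory Set Topology

lemma standardBorelSpace_of_measurableEquiv {α β : Type*} [MeasurableSpace α]
    [MeasurableSpace β] [hsb : StandardBorelSpace β] (e : α ≃ᵐ β) : StandardBorelSpace α := by
  obtain ⟨τβ, hbβ, hpβ⟩ := hsb.polish
  letI τ : TopologicalSpace α := TopologicalSpace.induced e τβ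
  have hind : IsInducing (e : α → β) := ⟨rfl⟩
  let h : α ≃ₜ β := e.toEquiv.toHomeomorphOfIsInducing hind
  have hp : PolishSpace α := h.isClosedEmbedding.polishSpace
  have hb : BorelSpace α := by
    constructor
    rw [show τ = TopologicalSpace.induced e τβ from rfl, borel_comap,
      ← hbβ.measurable_eq, e.measurableEmbedding.comap_eq]
  exact standardBorel_of_polish

variable {X : Type*} [TopologicalSpace X]

private theorem effros_key (U : ℕ → Set X) (hB : IsTopologicalBasis (Set.range U))
    (hP : ∀ n, PolishSpace (U n)) : StandardBorelSpace (Closeds X) := by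
  classical
  have hUopen : ∀ n, IsOpen (U n) := fun n => hB.isOpen ⟨n, rfl⟩
  -- the coding map
  set φ : Closeds X → (ℕ → Bool) :=
    fun F n => if ((F : Set X) ∩ U n).Nonempty then true else false with hφ
  have hφtrue : ∀ F n, φ F n = true ↔ ((F : Set X) ∩ U n).Nonempty := by
    intro F n; simp [hφ]
  -- basic covering fact
  have hcov : ∀ (F : Closeds X) (V : Set X), IsOpen V →
      (((F : Set X) ∩ V).Nonempty ↔ ∃ n, U n ⊆ V ∧ ((F : Set X) ∩ U n).Nonempty) := by
    intro F V hV
    constructor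
    · rintro ⟨x, hxF, hxV⟩
      obtain ⟨W, ⟨n, rfl⟩, hxW, hWV⟩ := hB.exists_subset_of_mem_open hxV hV
      exact ⟨n, hWV, ⟨x, hxF, hxW⟩⟩
    · rintro ⟨n, hn, x, hxF, hxU⟩
      exact ⟨x, hxF, hn hxU⟩
  have hgen : ∀ V : Set X, IsOpen V →
      MeasurableSet {F : Closeds X | ((F : Set X) ∩ V).Nonempty} := by
    intro V hV
    exact MeasurableSpace.measurableSet_generateFrom ⟨V, hV, rfl⟩
  -- the Effros σ-algebra is the comap of the product σ-algebra
  have hφmeas : Measurable φ := by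
    rw [measurable_pi_iff]
    intro n
    apply measurable_to_countable'
    intro b
    cases b
    · have : (fun F => φ F n) ⁻¹' {false} =
          {F : Closeds X | ((F : Set X) ∩ U n).Nonempty}ᶜ := by
        ext F; simp [hφtrue F n, hφ]
      rw [this]
      exact (hgen (U n) (hUopen n)).compl
    · have : (fun F => φ F n) ⁻¹' {true} =
          {F : Closeds X | ((F : Set X) ∩ U n).Nonempty} := by
        ext F; simpa using hφtrue F n
      rw [this]
      exact hgen (U n) (hUopen n)
  have hcomap : (effrosMeasurableSpace X) ≤ MeasurableSpace.comap φ inferInstance := by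
    rw [effrosMeasurableSpace]
    apply MeasurableSpace.generateFrom_le
    rintro S ⟨V, hV, rfl⟩
    refine ⟨⋃ n ∈ {n | U n ⊆ V}, {g : ℕ → Bool | g n = true}, ?_, ?_⟩
    · refine MeasurableSet.biUnion (to_countable _) (fun n _ => ?_)
      show MeasurableSet ((fun g : ℕ → Bool => g n) ⁻¹' {true})
      exact measurable_pi_apply n (measurableSet_singleton true)
    · ext F
      simp only [Set.mem_preimage, Set.mem_iUnion, Set.mem_setOf_eq]
      rw [hcov F V hV]
      simp only [hφtrue, exists_prop]
  -- injectivity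
  have hinj : Function.Injective φ := by
    intro F G h
    have key : ∀ (F G : Closeds X), φ F = φ G → ∀ x, x ∉ (F : Set X) → x ∉ (G : Set X) := by
      intro F G h x hx
      obtain ⟨W, ⟨n, rfl⟩, hxW, hWV⟩ :=
        hB.exists_subset_of_mem_open (show x ∈ (↑F : Set X)ᶜ from hx) F.isClosed.isOpen_compl
      have hFn : ¬((F : Set X) ∩ U n).Nonempty := by
        rintro ⟨y, hyF, hyU⟩; exact hWV hyU hyF
      have hf : φ G n = false := by
        rw [← h]; simp [hφ, hFn]
      intro hxG
      have ht : φ G n = true := (hφtrue G n).2 ⟨x, hxG, hxW⟩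
      rw [hf] at ht
      exact Bool.false_ne_true ht
    apply SetLike.ext'
    ext x
    constructor
    · intro hx; by_contra hc; exact key G F h.symm x hc hx
    · intro hx; by_contra hc; exact key F G h x hc hx
  -- upgraded Polish structure on each basic set
  letI upg : ∀ n, UpgradedIsCompletelyMetrizableSpace ↥(U n) := fun n =>
    haveI := hP n; upgradeIsCompletelyMetrizable _
  -- relative basic sets
  let V : ∀ n, ℕ → Set ↥(U n) := fun n m => Subtype.val ⁻¹' U m
  -- the geometric refinement predicate
  let D : ℕ → ℕ → ℕ → ℕ → Prop := fun n m m' j =>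
    U m' ⊆ U m ∧ (V n m').Nonempty ∧ closure (V n m') ⊆ V n m ∧
      Bornology.IsBounded (V n m') ∧ Metric.diam (V n m') ≤ (1 / 2 : ℝ) ^ j
  let Good : Set (ℕ → Bool) :=
    {g | (∀ m m', g m = true → U m ⊆ U m' → g m' = true) ∧
      ∀ n m j, g n = true → g m = true → U m ⊆ U n → ∃ m', g m' = true ∧ D n m m' j}
  have hcoord : ∀ k, MeasurableSet {g : ℕ → Bool | g k = true} := by
    intro k
    show MeasurableSet ((fun g : ℕ → Bool => g k) ⁻¹' {true})
    exact measurable_pi_apply k (measurableSet_singleton true)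
  have hGoodMeas : MeasurableSet Good := by
    have h1 : MeasurableSet {g : ℕ → Bool | ∀ m m', g m = true → U m ⊆ U m' → g m' = true} := by
      have he : {g : ℕ → Bool | ∀ m m', g m = true → U m ⊆ U m' → g m' = true} =
          ⋂ m, ⋂ m', {g : ℕ → Bool | g m = true → U m ⊆ U m' → g m' = true} := by
        ext g; simp
      rw [he]
      refine MeasurableSet.iInter fun m => MeasurableSet.iInter fun m' => ?_
      by_cases h : U m ⊆ U m'
      · have he2 : {g : ℕ → Bool | g m = true → U m ⊆ U m' → g m' = true} =
            {g : ℕ → Bool | g m = true}ᶜ ∪ {g | g m' = true} := by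
          ext g; by_cases hgm : g m = true <;> simp [h, hgm]
        rw [he2]; exact ((hcoord m).compl).union (hcoord m')
      · have he2 : {g : ℕ → Bool | g m = true → U m ⊆ U m' → g m' = true} = univ := by
          ext g; simp [h]
        rw [he2]; exact MeasurableSet.univ
    have h2 : MeasurableSet {g : ℕ → Bool |
        ∀ n m j, g n = true → g m = true → U m ⊆ U n → ∃ m', g m' = true ∧ D n m m' j} := by
      have he : {g : ℕ → Bool |
          ∀ n m j, g n = true → g m = true → U m ⊆ U n → ∃ m', g m' = true ∧ D n m m' j} =
          ⋂ n, ⋂ m, ⋂ j, {g : ℕ → Bool |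
            g n = true → g m = true → U m ⊆ U n → ∃ m', g m' = true ∧ D n m m' j} := by
        ext g; simp
      rw [he]
      refine MeasurableSet.iInter fun n => MeasurableSet.iInter fun m =>
        MeasurableSet.iInter fun j => ?_
      by_cases h : U m ⊆ U n
      · have he2 : {g : ℕ → Bool |
            g n = true → g m = true → U m ⊆ U n → ∃ m', g m' = true ∧ D n m m' j} =
            ({g : ℕ → Bool | g n = true} ∩ {g : ℕ → Bool | g m = true})ᶜ ∪
              ⋃ m' ∈ {m' | D n m m' j}, {g : ℕ → Bool | g m' = true} := by
          ext g
          simp only [mem_setOf_eq, mem_union, mem_compl_iff, mem_inter_iff, not_and,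
            mem_iUnion, exists_prop]
          constructor
          · intro himp
            by_cases hn : g n = true
            · by_cases hm : g m = true
              · obtain ⟨m', hm', hD⟩ := himp hn hm h
                exact Or.inr ⟨m', hD, hm'⟩
              · exact Or.inl fun h1 => hm
            · exact Or.inl fun h1 => absurd h1 hn
          · rintro (hne | ⟨m', hD, hm'⟩) hn hm _
            · exact absurd hm (hne hn)
            · exact ⟨m', hm', hD⟩
        rw [he2]
        exact (((hcoord n).inter (hcoord m)).compl).union
          (MeasurableSet.biUnion (to_countable _) (fun m' _ => hcoord m'))
      · have he2 : {g : ℕ → Bool |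
            g n = true → g m = true → U m ⊆ U n → ∃ m', g m' = true ∧ D n m m' j} = univ := by
          ext g; simp [h]
        rw [he2]; exact MeasurableSet.univ
    exact h1.inter h2
  -- the range of φ is exactly Good
  have hrange : Set.range φ = Good := by
    apply Set.Subset.antisymm
    · rintro _ ⟨F, rfl⟩
      constructor
      · intro m m' hm hsub
        rw [hφtrue] at hm ⊢
        obtain ⟨x, hxF, hxU⟩ := hm
        exact ⟨x, hxF, hsub hxU⟩
      · intro n m j hgn hgm hmn
        obtain ⟨x, hxF, hxU⟩ := (hφtrue F m).1 hgm
        have hxn : x ∈ U n := hmn hxU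
        set x' : ↥(U n) := ⟨x, hxn⟩ with hx'
        have hopen : IsOpen (V n m) := (hUopen m).preimage continuous_subtype_val
        have hx'V : x' ∈ V n m := hxU
        obtain ⟨ε, hε, hball⟩ := Metric.isOpen_iff.1 hopen x' hx'V
        set δ : ℝ := min (ε / 2) ((1 / 2 : ℝ) ^ j / 2) with hδ
        have hδpos : 0 < δ := lt_min (by linarith) (by positivity)
        have hδε : δ < ε := lt_of_le_of_lt (min_le_left _ _) (by linarith)
        have hcb : Metric.closedBall x' δ ⊆ V n m := fun z hz =>
          hball (lt_of_le_of_lt hz hδε)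
        have hob : IsOpen (Subtype.val '' Metric.ball x' δ) :=
          (hUopen n).isOpenMap_subtype_val _ Metric.isOpen_ball
        have hxmem : x ∈ Subtype.val '' Metric.ball x' δ :=
          ⟨x', Metric.mem_ball_self hδpos, rfl⟩
        obtain ⟨Wm, ⟨m', rfl⟩, hxW, hWsub⟩ := hB.exists_subset_of_mem_open hxmem hob
        have hVball : V n m' ⊆ Metric.ball x' δ := by
          intro z hz
          obtain ⟨w, hw, hwz⟩ := hWsub hz
          rwa [← Subtype.coe_injective hwz]
        refine ⟨m', (hφtrue F m').2 ⟨x, hxF, hxW⟩, ?_, ⟨x', hxW⟩, ?_, ?_, ?_⟩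
        · -- U m' ⊆ U m
          intro z hz
          obtain ⟨w, hw, hwz⟩ := hWsub hz
          have : w ∈ V n m := hcb (Metric.ball_subset_closedBall hw)
          rwa [← hwz]
        · -- closure condition
          exact (closure_mono hVball).trans
            ((Metric.closure_ball_subset_closedBall).trans hcb)
        · exact Metric.isBounded_ball.subset hVball
        · calc Metric.diam (V n m') ≤ Metric.diam (Metric.ball x' δ) :=
              Metric.diam_mono hVball Metric.isBounded_ball
            _ ≤ 2 * δ := Metric.diam_ball hδpos.le
            _ ≤ (1 / 2 : ℝ) ^ j := by
              have := min_le_right (ε / 2) ((1 / 2 : ℝ) ^ j / 2)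
              rw [hδ]; linarith
    · intro g hg
      obtain ⟨hMono, hRef⟩ := hg
      have hFopen : IsOpen {x : X | ∃ m, x ∈ U m ∧ g m = false} := by
        have he : {x : X | ∃ m, x ∈ U m ∧ g m = false} = ⋃ m ∈ {m | g m = false}, U m := by
          ext z; simp [and_comm]
        rw [he]; exact isOpen_biUnion fun m _ => hUopen m
      have hFclosed : IsClosed {x : X | ∀ m, x ∈ U m → g m = true} := by
        have he : {x : X | ∀ m, x ∈ U m → g m = true} =
            {x : X | ∃ m, x ∈ U m ∧ g m = false}ᶜ := by
          ext z
          simp only [mem_setOf_eq, mem_compl_iff, not_exists, not_and, Bool.not_eq_false]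
        rw [he]; exact hFopen.isClosed_compl
      refine ⟨⟨{x : X | ∀ m, x ∈ U m → g m = true}, hFclosed⟩, ?_⟩
      set F : Closeds X := ⟨{x : X | ∀ m, x ∈ U m → g m = true}, hFclosed⟩ with hF
      funext n
      by_cases hgn : g n = true
      swap
      · -- g n = false: F ∩ U n is empty
        have hne : ¬((F : Set X) ∩ U n).Nonempty := by
          rintro ⟨x, hxF, hxU⟩
          exact hgn (hxF n hxU)
        rw [Bool.not_eq_true] at hgn
        rw [hgn]
        simp [hφ, hne]
      · -- g n = true: construct a point of F ∩ U n
        rw [hgn]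
        apply (hφtrue F n).2
        have step : ∀ m, g m = true → U m ⊆ U n → ∀ i : ℕ,
            ∃ m', (g m' = true ∧ U m' ⊆ U n) ∧ D n m m' i := by
          intro m hm hmn i
          obtain ⟨m', hm', hD⟩ := hRef n m i hgn hm hmn
          exact ⟨m', ⟨hm', hD.1.trans hmn⟩, hD⟩
        choose nxt hnxt using step
        let seq : ℕ → {m : ℕ // g m = true ∧ U m ⊆ U n} := fun i =>
          Nat.rec ⟨n, hgn, subset_rfl⟩
            (fun i p => ⟨nxt p.1 p.2.1 p.2.2 i, (hnxt p.1 p.2.1 p.2.2 i).1⟩) i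
        have hstep : ∀ i, D n (seq i).1 (seq (i + 1)).1 i := fun i =>
          (hnxt (seq i).1 (seq i).2.1 (seq i).2.2 i).2
        set W : ℕ → Set ↥(U n) := fun i => V n (seq i).1 with hWdef
        have hWsub : ∀ i, W (i + 1) ⊆ W i := fun i => preimage_mono (hstep i).1
        have hWanti : Antitone W := antitone_nat_of_succ_le hWsub
        have hWne : ∀ i, (W (i + 1)).Nonempty := fun i => (hstep i).2.1
        choose x hx using hWne
        have hxmem : ∀ i i', i ≤ i' → x i' ∈ W (i + 1) := fun i i' h =>
          hWanti (by omega : i + 1 ≤ i' + 1) (hx i')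
        have hbd : ∀ i, Bornology.IsBounded (W (i + 1)) := fun i => (hstep i).2.2.2.1
        have hdiam : ∀ i, Metric.diam (W (i + 1)) ≤ (1 / 2 : ℝ) ^ i := fun i =>
          (hstep i).2.2.2.2
        have hcauchy : CauchySeq x := by
          apply cauchySeq_of_le_tendsto_0 (fun i => (1 / 2 : ℝ) ^ i) ?_ ?_
          · intro p q N hp hq
            calc dist (x p) (x q) ≤ Metric.diam (W (N + 1)) :=
                Metric.dist_le_diam_of_mem (hbd N) (hxmem N p hp) (hxmem N q hq)
              _ ≤ (1 / 2 : ℝ) ^ N := hdiam N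
          · exact tendsto_pow_atTop_nhds_zero_of_lt_one (by norm_num) (by norm_num)
        obtain ⟨y, hy⟩ := cauchySeq_tendsto_of_complete hcauchy
        have hyW : ∀ i, y ∈ W i := by
          intro i
          have h1 : y ∈ closure (W (i + 1)) := by
            apply mem_closure_of_tendsto hy
            filter_upwards [Filter.eventually_ge_atTop i] with i' hi'
            exact hxmem i i' hi'
          exact (hstep i).2.2.1 h1
        refine ⟨y.val, ?_, y.2⟩
        intro m hym
        have hopen : IsOpen (V n m) := (hUopen m).preimage continuous_subtype_val
        obtain ⟨ε, hε, hball⟩ := Metric.isOpen_iff.1 hopen y hym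
        obtain ⟨i, hi⟩ : ∃ i : ℕ, (1 / 2 : ℝ) ^ i < ε :=
          exists_pow_lt_of_lt_one hε (by norm_num)
        have hWball : W (i + 1) ⊆ Metric.ball y ε := by
          intro z hz
          have hd : dist z y ≤ (1 / 2 : ℝ) ^ i :=
            le_trans (Metric.dist_le_diam_of_mem (hbd i) hz (hyW (i + 1))) (hdiam i)
          exact lt_of_le_of_lt hd hi
        have hsubm : U (seq (i + 1)).1 ⊆ U m := by
          intro z hz
          have hzUn : z ∈ U n := (seq (i + 1)).2.2 hz
          have hzW : (⟨z, hzUn⟩ : ↥(U n)) ∈ W (i + 1) := hz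
          exact hball (hWball hzW)
        exact hMono (seq (i + 1)).1 m (seq (i + 1)).2.1 hsubm
  -- assembling everything
  have hrangeMeas : MeasurableSet (Set.range φ) := by rw [hrange]; exact hGoodMeas
  haveI : StandardBorelSpace ↥(Set.range φ) := hrangeMeas.standardBorel
  let e : Closeds X ≃ Set.range φ := Equiv.ofInjective φ hinj
  have he1 : Measurable e := Measurable.subtype_mk hφmeas
  have he2 : Measurable e.symm := by
    intro s hs
    obtain ⟨t, ht, rfl⟩ := hcomap s hs
    have : e.symm ⁻¹' (φ ⁻¹' t) = Subtype.val ⁻¹' t := by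
      ext a
      simp only [Set.mem_preimage]
      rw [Equiv.apply_ofInjective_symm hinj a]
    rw [this]
    exact measurable_subtype_coe ht
  exact standardBorelSpace_of_measurableEquiv ⟨e, he1, he2⟩


end Aux

/-- If `X` is locally Polish, then the space of closed subsets of `X` with the
Effros Borel σ-algebra is a standard Borel space. -/
theorem effros_standardBorelSpace (X : Type*) [TopologicalSpace X]
    (hX : LocallyPolish X) : StandardBorelSpace (Closeds X) := by
  obtain ⟨B, hBc, hBbasis, hBpolish⟩ := hX
  obtain ⟨U, hU⟩ : ∃ U : ℕ → Set X, insert ∅ B = Set.range U :=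
    Set.Countable.exists_eq_range (hBc.insert ∅) (Set.insert_nonempty _ _)
  have hbasis : IsTopologicalBasis (Set.range U) := hU ▸ hBbasis.insert_empty
  have hpolish : ∀ n, PolishSpace (U n) := by
    intro n
    have hmem : U n ∈ insert ∅ B := hU ▸ Set.mem_range_self n
    rcases hmem with h | h
    · rw [h]
      have : IsEmpty ↥(∅ : Set X) := by infer_instance
      have : DiscreteTopology ↥(∅ : Set X) := by
        constructor
        apply Subsingleton.elim
      infer_instance
    · exact hBpolish _ h
  exact effros_key U hbasis hpolish
end

section
/- Let X be a locally Polish space. Then the set F₁(X) of closed subsets of X containing exactly one element is a Borel subset of F(X) with respect to the Effros Borel σ-algebra, and the map x ↦ {x} is a measurable isomorphism from X (with its Borel σ-algebra) onto F₁(X). -/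
open TopologicalSpace

/-- If `X` is locally Polish, then the set `F₁(X)` of closed subsets of `X` with exactly
one element is Borel in the Effros Borel σ-algebra, and `x ↦ {x}` is a measurable
isomorphism from `X` (with its Borel σ-algebra) onto `F₁(X)`. -/
theorem effros_singletons_borel_and_iso (X : Type*) [TopologicalSpace X]
    [MeasurableSpace X] [BorelSpace X] (hX : LocallyPolish X) :
    MeasurableSet {F : Closeds X | ∃ x : X, (F : Set X) = {x}} ∧
    ∃ e : X ≃ᵐ {F : Closeds X // ∃ x : X, (F : Set X) = {x}},
      ∀ x : X, ((e x).1 : Set X) = {x} := by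
  obtain ⟨B, hBc, hBb, hBp⟩ := hX
  -- the generating sets are measurable
  have hgen : ∀ U : Set X, IsOpen U →
      MeasurableSet {F : Closeds X | ((F : Set X) ∩ U).Nonempty} :=
    fun U hU => MeasurableSpace.measurableSet_generateFrom ⟨U, hU, rfl⟩
  -- Hausdorff separation inside a basic set
  have hT2 : ∀ U ∈ B, ∀ x y : X, x ∈ U → y ∈ U → x ≠ y →
      ∃ V W : Set X, IsOpen V ∧ IsOpen W ∧ x ∈ V ∧ y ∈ W ∧ V ⊆ U ∧ W ⊆ U ∧ Disjoint V W := by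
    intro U hU x y hx hy hxy
    haveI := hBp U hU
    have hUo : IsOpen U := hBb.isOpen hU
    obtain ⟨v, w, hv, hw, hxv, hyw, hvw⟩ :=
      t2_separation (show (⟨x, hx⟩ : U) ≠ ⟨y, hy⟩ from fun h => hxy (congrArg Subtype.val h))
    refine ⟨Subtype.val '' v, Subtype.val '' w, hUo.isOpenMap_subtype_val v hv,
      hUo.isOpenMap_subtype_val w hw, ⟨⟨x, hx⟩, hxv, rfl⟩, ⟨⟨y, hy⟩, hyw, rfl⟩,
      ?_, ?_, ?_⟩
    · rintro _ ⟨z, _, rfl⟩; exact z.2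
    · rintro _ ⟨z, _, rfl⟩; exact z.2
    · rw [Set.disjoint_left]
      rintro _ ⟨z, hz, rfl⟩ ⟨z', hz', hzz'⟩
      exact Set.disjoint_left.mp hvw hz (Subtype.val_injective hzz' ▸ hz')
  -- separation of distinct points by basic open sets
  have sep : ∀ x y : X, x ≠ y → ∃ U ∈ B, x ∈ U ∧ y ∉ U := by
    intro x y hxy
    obtain ⟨U₀, hU₀, hxU₀, -⟩ := hBb.exists_subset_of_mem_open (Set.mem_univ x) isOpen_univ
    by_cases hy : y ∈ U₀
    · obtain ⟨V, W, hVo, hWo, hxV, hyW, hVU, hWU, hd⟩ := hT2 U₀ hU₀ x y hxU₀ hy hxy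
      obtain ⟨U, hUB, hxU, hUV⟩ := hBb.exists_subset_of_mem_open hxV hVo
      exact ⟨U, hUB, hxU, fun hyU => Set.disjoint_left.mp hd (hUV hyU) hyW⟩
    · exact ⟨U₀, hU₀, hxU₀, hy⟩
  -- singletons are closed
  have hT1 : ∀ x : X, IsClosed ({x} : Set X) := by
    intro x
    rw [← isOpen_compl_iff, isOpen_iff_forall_mem_open]
    intro y hy
    have hyx : y ≠ x := by simpa using hy
    obtain ⟨U, hUB, hyU, hxU⟩ := sep y x hyx
    refine ⟨U, fun z hz => ?_, hBb.isOpen hUB, hyU⟩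
    simp only [Set.mem_compl_iff, Set.mem_singleton_iff]
    rintro rfl; exact hxU hz
  -- the key characterization of singletons
  have key : ∀ F : Closeds X, (∃ x : X, (F : Set X) = {x}) ↔
      ((∃ U ∈ B, ((F : Set X) ∩ U).Nonempty) ∧
       ∀ U ∈ B, ∀ V ∈ B, ((F : Set X) ∩ U).Nonempty → ((F : Set X) ∩ V).Nonempty →
         ∃ W ∈ B, W ⊆ U ∩ V ∧ ((F : Set X) ∩ W).Nonempty) := by
    intro F
    constructor
    · rintro ⟨x, hF⟩
      rw [hF]
      constructor
      · obtain ⟨U, hUB, hxU, -⟩ := hBb.exists_subset_of_mem_open (Set.mem_univ x) isOpen_univ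
        exact ⟨U, hUB, x, rfl, hxU⟩
      · rintro U hUB V hVB ⟨a, ha, haU⟩ ⟨b, hb, hbV⟩
        rw [Set.mem_singleton_iff] at ha hb
        rw [ha] at haU; rw [hb] at hbV
        obtain ⟨W, hWB, hxW, hWsub⟩ := hBb.exists_subset_of_mem_open
          (Set.mem_inter haU hbV) ((hBb.isOpen hUB).inter (hBb.isOpen hVB))
        exact ⟨W, hWB, hWsub, x, rfl, hxW⟩
    · rintro ⟨⟨U₀, hU₀, z, hzF, hzU₀⟩, hfilt⟩
      -- no basic set contains two distinct points of F
      have step1 : ∀ U ∈ B, ∀ p q : X, p ∈ (F : Set X) → q ∈ (F : Set X) →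
          p ∈ U → q ∈ U → p = q := by
        intro U hU p q hp hq hpU hqU
        by_contra hpq
        obtain ⟨V, W, hVo, hWo, hpV, hqW, hVU, hWU, hd⟩ := hT2 U hU p q hpU hqU hpq
        obtain ⟨U', hU'B, hpU', hU'V⟩ := hBb.exists_subset_of_mem_open hpV hVo
        obtain ⟨V', hV'B, hqV', hV'W⟩ := hBb.exists_subset_of_mem_open hqW hWo
        obtain ⟨W', hW'B, hW'sub, c, hcF, hcW'⟩ :=
          hfilt U' hU'B V' hV'B ⟨p, hp, hpU'⟩ ⟨q, hq, hqV'⟩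
        exact Set.disjoint_left.mp hd (hU'V (hW'sub hcW').1) (hV'W (hW'sub hcW').2)
      have hsub : ∀ a ∈ (F : Set X), ∀ b ∈ (F : Set X), a = b := by
        intro a ha b hb
        by_contra hab
        obtain ⟨U, hUB, haU, hbU⟩ := sep a b hab
        obtain ⟨V, hVB, hbV, haV⟩ := sep b a (Ne.symm hab)
        obtain ⟨W, hWB, hWsub, c, hcF, hcW⟩ := hfilt U hUB V hVB ⟨a, ha, haU⟩ ⟨b, hb, hbV⟩
        have hca : c ≠ a := fun h => haV (h ▸ (hWsub hcW).2)
        exact hca (step1 U hUB c a hcF ha (hWsub hcW).1 haU)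
      exact ⟨z, Set.eq_singleton_iff_unique_mem.mpr ⟨hzF, fun b hb => hsub b hb z hzF⟩⟩
  -- measurability of the set of singletons
  have hset : {F : Closeds X | ∃ x : X, (F : Set X) = {x}} =
      (⋃ U ∈ B, {F : Closeds X | ((F : Set X) ∩ U).Nonempty}) ∩
      ⋂ U ∈ B, ⋂ V ∈ B,
        ({F : Closeds X | ((F : Set X) ∩ U).Nonempty} ∩
          {F : Closeds X | ((F : Set X) ∩ V).Nonempty})ᶜ ∪
        ⋃ W ∈ {W ∈ B | W ⊆ U ∩ V}, {F : Closeds X | ((F : Set X) ∩ W).Nonempty} := by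
    ext F
    simp only [Set.mem_setOf_eq, key F, Set.mem_inter_iff, Set.mem_iUnion, Set.mem_iInter,
      Set.mem_union, Set.mem_compl_iff, Set.mem_sep_iff, exists_prop]
    constructor
    · rintro ⟨h1, h2⟩
      refine ⟨h1, fun U hU V hV => ?_⟩
      by_cases hFU : ((F : Set X) ∩ U).Nonempty
      · by_cases hFV : ((F : Set X) ∩ V).Nonempty
        · obtain ⟨W, hWB, hWsub, hFW⟩ := h2 U hU V hV hFU hFV
          exact Or.inr ⟨W, ⟨hWB, hWsub⟩, hFW⟩
        · exact Or.inl fun h => absurd h.2 hFV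
      · exact Or.inl fun h => absurd h.1 hFU
    · rintro ⟨h1, h2⟩
      refine ⟨h1, fun U hU V hV hFU hFV => ?_⟩
      rcases h2 U hU V hV with h | ⟨W, ⟨hWB, hWsub⟩, hFW⟩
      · exact absurd ⟨hFU, hFV⟩ h
      · exact ⟨W, hWB, hWsub, hFW⟩
  have hmeas : MeasurableSet {F : Closeds X | ∃ x : X, (F : Set X) = {x}} := by
    rw [hset]
    refine MeasurableSet.inter ?_ ?_
    · exact MeasurableSet.biUnion hBc fun U hU => hgen U (hBb.isOpen hU)
    · refine MeasurableSet.biInter hBc fun U hU => MeasurableSet.biInter hBc fun V hV => ?_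
      refine MeasurableSet.union
        (((hgen U (hBb.isOpen hU)).inter (hgen V (hBb.isOpen hV))).compl) ?_
      exact MeasurableSet.biUnion (hBc.mono (Set.sep_subset _ _))
        fun W hW => hgen W (hBb.isOpen hW.1)
  refine ⟨hmeas, ?_⟩
  -- the measurable isomorphism
  let g : {F : Closeds X // ∃ x : X, (F : Set X) = {x}} → X := fun F => F.2.choose
  have hg : ∀ F : {F : Closeds X // ∃ x : X, (F : Set X) = {x}},
      ((F.1 : Closeds X) : Set X) = {g F} := fun F => F.2.choose_spec
  have hfmeas : Measurable (fun x : X => (⟨{x}, hT1 x⟩ : Closeds X)) := by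
    refine measurable_generateFrom ?_
    rintro S ⟨U, hU, rfl⟩
    have h : (fun x : X => (⟨{x}, hT1 x⟩ : Closeds X)) ⁻¹'
        {F : Closeds X | ((F : Set X) ∩ U).Nonempty} = U := by
      ext x
      simp [Set.singleton_inter_nonempty]
    rw [h]
    exact hU.measurableSet
  have hgmeas : Measurable g := by
    refine measurable_of_isOpen fun U hU => ?_
    have h : g ⁻¹' U = Subtype.val ⁻¹' {F : Closeds X | ((F : Set X) ∩ U).Nonempty} := by
      ext F
      simp only [Set.mem_preimage, Set.mem_setOf_eq]
      rw [hg F, Set.singleton_inter_nonempty]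
    rw [h]
    exact MeasurableSet.preimage (hgen U hU) measurable_subtype_coe
  refine ⟨⟨⟨fun x => ⟨⟨{x}, hT1 x⟩, x, rfl⟩, g, ?_, ?_⟩, ?_, ?_⟩, fun x => rfl⟩
  · intro x
    have h := hg ⟨⟨{x}, hT1 x⟩, x, rfl⟩
    exact (Set.singleton_eq_singleton_iff.mp h).symm
  · intro F
    exact Subtype.ext (Closeds.ext (hg F).symm)
  · exact Measurable.subtype_mk hfmeas
  · exact hgmeas
end

section
/- Let X be a locally Polish space with a countable basis (U_n)_{n∈ω} of open Polish subsets. Then the set of y ∈ 2^ω for which there exists a closed subset F of X such that, for every n, y(n) = 1 if and only if F ∩ U_n ≠ ∅, is a Gδ subset of the Cantor space 2^ω. -/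
open TopologicalSpace ENNReal

lemma myEvalOpen (n : ℕ) (b : Bool) : IsOpen {y : ℕ → Bool | y n = b} := by
  have : {y : ℕ → Bool | y n = b} = (fun y : ℕ → Bool => y n) ⁻¹' {b} := rfl
  rw [this]
  exact (continuous_apply n).isOpen_preimage _ (isOpen_discrete _)

lemma myConstOpen (P : Prop) : IsOpen {_y : ℕ → Bool | P} := by
  by_cases h : P
  · have : {y : ℕ → Bool | P} = Set.univ := by ext y; simp [h]
    rw [this]; exact isOpen_univ
  · have : {y : ℕ → Bool | P} = ∅ := by ext y; simp [h]
    rw [this]; exact isOpen_empty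

lemma myImpOpen {T : Set (ℕ → Bool)} (hT : IsOpen T) (m : ℕ) (Q : Prop) :
    IsOpen {y : ℕ → Bool | y m = true → Q → y ∈ T} := by
  by_cases hQ : Q
  · have : {y : ℕ → Bool | y m = true → Q → y ∈ T} = {y | y m = false} ∪ T := by
      ext y
      by_cases h : y m = true <;> simp [h, hQ]
    rw [this]
    exact (myEvalOpen m false).union hT
  · have : {y : ℕ → Bool | y m = true → Q → y ∈ T} = Set.univ := by
      ext y; simp [hQ]
    rw [this]; exact isOpen_univ

lemma myExistsOpen (P : ℕ → Prop) : IsOpen {y : ℕ → Bool | ∃ j, y j = true ∧ P j} := by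
  have : {y : ℕ → Bool | ∃ j, y j = true ∧ P j} = ⋃ j ∈ {j | P j}, {y | y j = true} := by
    ext y; simp [and_comm]
  rw [this]
  exact isOpen_biUnion fun j _ => myEvalOpen j true

noncomputable def myDiam {α : Type*} (m : MetricSpace α) (s : Set α) : ℝ≥0∞ :=
  @EMetric.diam α (@PseudoMetricSpace.toPseudoEMetricSpace α m.toPseudoMetricSpace) s

lemma myDiam_eq {α : Type*} [m : MetricSpace α] (s : Set α) : myDiam m s = EMetric.diam s := rfl

lemma myDiam_mono {α : Type*} (m : MetricSpace α) {s t : Set α} (h : s ⊆ t) :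
    myDiam m s ≤ myDiam m t :=
  by letI := m; exact EMetric.diam_mono h

lemma myChain {α : Type*} [MetricSpace α] [CompleteSpace α]
    (W : ℕ → Set α) (c : ℕ → ℕ)
    (hne : ∀ k, (W (c k)).Nonempty)
    (hmono : ∀ k, W (c (k+1)) ⊆ W (c k))
    (hcl : ∀ k, closure (W (c (k+1))) ⊆ W (c k))
    (hdiam : ∀ k, EMetric.diam (W (c (k+1))) ≤ 2⁻¹ ^ k) :
    ∃ x, (∀ k, x ∈ W (c k)) ∧ ∀ p, IsOpen (W p) → x ∈ W p → ∃ k, W (c k) ⊆ W p := by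
  choose xs hxs using hne
  have hmono' : ∀ k l, k ≤ l → W (c l) ⊆ W (c k) := by
    intro k l hkl
    induction l with
    | zero => simp_all
    | succ l ih =>
      rcases Nat.lt_or_ge k (l+1) with h | h
      · exact (hmono l).trans (ih (Nat.lt_succ_iff.mp h))
      · have : k = l + 1 := le_antisymm hkl h
        subst this; exact Set.Subset.rfl
  have hcauchy : CauchySeq xs := by
    rw [EMetric.cauchySeq_iff]
    intro ε hε
    obtain ⟨k, hk⟩ := ENNReal.exists_inv_two_pow_lt hε.ne'
    refine ⟨k + 1, fun m hm n hn => ?_⟩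
    calc edist (xs m) (xs n) ≤ EMetric.diam (W (c (k+1))) :=
          EMetric.edist_le_diam_of_mem (hmono' (k+1) m hm (hxs m)) (hmono' (k+1) n hn (hxs n))
      _ ≤ 2⁻¹ ^ k := hdiam k
      _ < ε := hk
  obtain ⟨x, hx⟩ := cauchySeq_tendsto_of_complete hcauchy
  have hxW : ∀ k, x ∈ W (c k) := by
    intro k
    apply hcl k
    apply mem_closure_of_tendsto hx
    filter_upwards [Filter.eventually_ge_atTop (k+1)] with l hl
    exact hmono' (k+1) l hl (hxs l)
  refine ⟨x, hxW, fun p hp hxp => ?_⟩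
  obtain ⟨ε, hε, hball⟩ := EMetric.isOpen_iff.mp hp x hxp
  obtain ⟨k, hk⟩ := ENNReal.exists_inv_two_pow_lt hε.ne'
  refine ⟨k + 1, fun z hz => hball ?_⟩
  calc edist z x ≤ EMetric.diam (W (c (k+1))) :=
        EMetric.edist_le_diam_of_mem hz (hxW (k+1))
    _ ≤ 2⁻¹ ^ k := hdiam k
    _ < ε := hk

lemma two_mul_inv_two_pow (k : ℕ) : (2 : ℝ≥0∞) * 2⁻¹ ^ (k+1) = 2⁻¹ ^ k := by
  rw [pow_succ, mul_comm, mul_assoc, ENNReal.inv_mul_cancel (by norm_num) (by norm_num), mul_one]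

/-- Forward step: in a completely metrizable space, inside any open set containing a point
we can find an open set containing the point whose closure is inside and which has small
diameter. -/
lemma myForward {α : Type*} [t : TopologicalSpace α] (m : MetricSpace α)
    (hm : m.toUniformSpace.toTopologicalSpace = t)
    {s : Set α} (hs : IsOpen s) {x : α} (hx : x ∈ s) (k : ℕ) :
    ∃ t' : Set α, IsOpen t' ∧ x ∈ t' ∧ closure t' ⊆ s ∧ myDiam m t' ≤ 2⁻¹ ^ k := by
  subst hm
  letI := m
  obtain ⟨ε, hε, hball⟩ := EMetric.isOpen_iff.mp hs x hx
  set r : ℝ≥0∞ := min (ε/2) (2⁻¹ ^ (k+1)) with hr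
  have h2pos : (0 : ℝ≥0∞) < 2⁻¹ ^ (k+1) :=
    ENNReal.pow_pos (ENNReal.inv_pos.mpr (by norm_num)) _
  have hrpos : 0 < r := lt_min (ENNReal.half_pos hε.ne') h2pos
  have hrε : r < ε := by
    rcases eq_or_ne ε ⊤ with h | h
    · refine lt_of_le_of_lt (min_le_right _ _) ?_
      rw [h]
      exact ENNReal.pow_lt_top (ENNReal.inv_lt_top.mpr (by norm_num))
    · exact lt_of_le_of_lt (min_le_left _ _) (ENNReal.half_lt_self hε.ne' h)
  refine ⟨EMetric.ball x r, EMetric.isOpen_ball, EMetric.mem_ball_self hrpos, ?_, ?_⟩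
  · have h1 : closure (EMetric.ball x r) ⊆ EMetric.closedBall x r :=
      closure_minimal EMetric.ball_subset_closedBall Metric.isClosed_closedEBall
    exact h1.trans fun z hz => hball (lt_of_le_of_lt hz hrε)
  · rw [myDiam_eq]
    calc EMetric.diam (EMetric.ball x r) ≤ 2 * r := EMetric.diam_ball
      _ ≤ 2 * 2⁻¹ ^ (k+1) := mul_le_mul_right (min_le_right _ _) 2
      _ = 2⁻¹ ^ k := two_mul_inv_two_pow k

/-- Backward chain: version of `myChain` with an explicit compatible complete metric. -/
lemma myBackward {α : Type*} [t : TopologicalSpace α] (m : MetricSpace α)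
    (hm : m.toUniformSpace.toTopologicalSpace = t)
    (hc : @CompleteSpace α m.toUniformSpace)
    (W : ℕ → Set α) (c : ℕ → ℕ)
    (hne : ∀ k, (W (c k)).Nonempty)
    (hmono : ∀ k, W (c (k+1)) ⊆ W (c k))
    (hcl : ∀ k, closure (W (c (k+1))) ⊆ W (c k))
    (hdiam : ∀ k, myDiam m (W (c (k+1))) ≤ 2⁻¹ ^ k) :
    ∃ x, (∀ k, x ∈ W (c k)) ∧ ∀ p, IsOpen (W p) → x ∈ W p → ∃ k, W (c k) ⊆ W p := by
  subst hm
  letI := m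
  haveI : CompleteSpace α := hc
  exact myChain W c hne hmono hcl hdiam

/-- Let `X` be a locally Polish space with a countable basis `(U n)` of open Polish
subsets. The set of `y ∈ 2^ω` for which there is a closed set `F ⊆ X` with
`y n = 1 ↔ F ∩ U n ≠ ∅` for every `n` is a Gδ subset of the Cantor space. -/
theorem isGδ_codes_of_closed_sets {X : Type*} [TopologicalSpace X]
    (U : ℕ → Set X) (hbasis : IsTopologicalBasis (Set.range U))
    (hpolish : ∀ n, PolishSpace (U n)) :
    IsGδ {y : ℕ → Bool | ∃ F : Set X, IsClosed F ∧
      ∀ n : ℕ, y n = true ↔ (F ∩ U n).Nonempty} := by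
  classical
  have hUopen : ∀ n, IsOpen (U n) := fun n => hbasis.isOpen ⟨n, rfl⟩
  choose mS hmS using fun n => (hpolish n).complete
  have hset : {y : ℕ → Bool | ∃ F : Set X, IsClosed F ∧
      ∀ n : ℕ, y n = true ↔ (F ∩ U n).Nonempty} =
      (⋂ n, {y : ℕ → Bool | y n = true → True → y ∈ {y' : ℕ → Bool | (U n).Nonempty}}) ∩
      ((⋂ q : ℕ × ℕ, {y : ℕ → Bool | y q.1 = true → U q.1 ⊆ U q.2 →
          y ∈ {y' : ℕ → Bool | y' q.2 = true}}) ∩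
       (⋂ r : ℕ × ℕ × ℕ, {y : ℕ → Bool | y r.2.1 = true → U r.2.1 ⊆ U r.1 →
          y ∈ {y' : ℕ → Bool | ∃ j, y' j = true ∧ (U j ⊆ U r.2.1 ∧
            closure {x : U r.1 | (x : X) ∈ U j} ⊆ {x : U r.1 | (x : X) ∈ U r.2.1} ∧
            myDiam (mS r.1) {x : U r.1 | (x : X) ∈ U j} ≤ 2⁻¹ ^ r.2.2)}})) := by
    ext y
    simp only [Set.mem_setOf_eq, Set.mem_inter_iff, Set.mem_iInter]
    constructor
    · rintro ⟨F, hF, hiff⟩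
      refine ⟨fun n hn _ => ?_, fun q hq hsub => ?_, fun r hm hsub => ?_⟩
      · obtain ⟨x, -, hx⟩ := (hiff n).mp hn
        exact ⟨x, hx⟩
      · obtain ⟨x, hxF, hx⟩ := (hiff q.1).mp hq
        exact (hiff q.2).mpr ⟨x, hxF, hsub hx⟩
      · obtain ⟨n, m, k⟩ := r
        simp only at hm hsub ⊢
        obtain ⟨x, hxF, hxm⟩ := (hiff m).mp hm
        have hVm : IsOpen {z : U n | (z : X) ∈ U m} :=
          (hUopen m).preimage continuous_subtype_val
        obtain ⟨t', ht'o, hxt', hcl', hdiam'⟩ :=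
          myForward (mS n) (hmS n).1 hVm (show (⟨x, hsub hxm⟩ : U n) ∈ _ from hxm) k
        have hO : IsOpen (Subtype.val '' t') := (hUopen n).isOpenMap_subtype_val t' ht'o
        obtain ⟨v, ⟨j, rfl⟩, hxv, hvsub⟩ :=
          hbasis.exists_subset_of_mem_open (⟨⟨x, hsub hxm⟩, hxt', rfl⟩ : x ∈ Subtype.val '' t') hO
        have hyj : y j = true := (hiff j).mpr ⟨x, hxF, hxv⟩
        have hVj : {z : U n | (z : X) ∈ U j} ⊆ t' := by
          rintro z hz
          obtain ⟨w, hw, hwz⟩ := hvsub hz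
          rwa [show w = z from Subtype.val_injective hwz] at hw
        have hUj : U j ⊆ U m := by
          intro z hz
          obtain ⟨w, hw, rfl⟩ := hvsub hz
          exact hcl' (subset_closure hw)
        refine ⟨j, hyj, hUj, ?_, ?_⟩
        · exact (closure_mono hVj).trans hcl'
        · exact (myDiam_mono (mS n) hVj).trans hdiam'
    · rintro ⟨h0, h1, h2⟩
      refine ⟨{x | ∀ m, x ∈ U m → y m = true}, ?_,
        fun n => ⟨fun hn => ?_, fun h => h.choose_spec.1 n h.choose_spec.2⟩⟩
      · rw [← isOpen_compl_iff]
        have : {x : X | ∀ m, x ∈ U m → y m = true}ᶜ = ⋃ m ∈ {m | ¬ y m = true}, U m := by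
          ext x
          simp only [Set.mem_compl_iff, Set.mem_setOf_eq, Set.mem_iUnion, not_forall]
          tauto
        rw [this]
        exact isOpen_biUnion fun m _ => hUopen m
      · have hstep : ∀ m k, y m = true → U m ⊆ U n → ∃ j, y j = true ∧ U j ⊆ U m ∧
            closure {x : U n | (x : X) ∈ U j} ⊆ {x : U n | (x : X) ∈ U m} ∧
            myDiam (mS n) {x : U n | (x : X) ∈ U j} ≤ 2⁻¹ ^ k := by
          intro m k hm hsub
          obtain ⟨j, hj1, hj2, hj3, hj4⟩ := h2 (n, m, k) hm hsub
          exact ⟨j, hj1, hj2, hj3, hj4⟩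
        choose! J hJ1 hJ2 hJ3 hJ4 using hstep
        let g : ℕ → {m : ℕ // y m = true ∧ U m ⊆ U n} := fun k =>
          Nat.rec ⟨n, hn, subset_rfl⟩
            (fun k p => ⟨J p.1 k, hJ1 p.1 k p.2.1 p.2.2,
              (hJ2 p.1 k p.2.1 p.2.2).trans p.2.2⟩) k
        have hc1 : ∀ k, y ((g k).1) = true := fun k => (g k).2.1
        have hc2 : ∀ k, U ((g k).1) ⊆ U n := fun k => (g k).2.2
        have hcs : ∀ k, (g (k+1)).1 = J ((g k).1) k := fun k => rfl
        have hne : ∀ k, ({x : U n | (x : X) ∈ U ((g k).1)} : Set (U n)).Nonempty := by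
          intro k
          obtain ⟨x, hx⟩ := h0 ((g k).1) (hc1 k) trivial
          exact ⟨⟨x, hc2 k hx⟩, hx⟩
        have hmono : ∀ k, {x : U n | (x : X) ∈ U ((g (k+1)).1)} ⊆
            {x : U n | (x : X) ∈ U ((g k).1)} := by
          intro k x hx
          exact hJ2 ((g k).1) k (hc1 k) (hc2 k) hx
        have hcl : ∀ k, closure {x : U n | (x : X) ∈ U ((g (k+1)).1)} ⊆
            {x : U n | (x : X) ∈ U ((g k).1)} := fun k =>
          hJ3 ((g k).1) k (hc1 k) (hc2 k)
        have hdiam : ∀ k, myDiam (mS n) {x : U n | (x : X) ∈ U ((g (k+1)).1)} ≤ 2⁻¹ ^ k :=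
          fun k => hJ4 ((g k).1) k (hc1 k) (hc2 k)
        obtain ⟨x, hxk, hxless⟩ := myBackward (mS n) (hmS n).1 (hmS n).2
          (fun p => {x : U n | (x : X) ∈ U p}) (fun k => (g k).1) hne hmono hcl hdiam
        refine ⟨(x : X), ?_, hxk 0⟩
        intro p hp
        have hVp : IsOpen {z : U n | (z : X) ∈ U p} :=
          (hUopen p).preimage continuous_subtype_val
        obtain ⟨k, hk⟩ := hxless p hVp hp
        have hUc : U ((g k).1) ⊆ U p := fun z hz =>
          hk (show (⟨z, hc2 k hz⟩ : U n) ∈ _ from hz)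
        exact h1 ((g k).1, p) (hc1 k) hUc
  rw [hset]
  refine IsGδ.inter (IsGδ.iInter_of_isOpen fun n => ?_)
    (IsGδ.inter (IsGδ.iInter_of_isOpen fun q => ?_) (IsGδ.iInter_of_isOpen fun r => ?_))
  · exact myImpOpen (myConstOpen _) n True
  · exact myImpOpen (myEvalOpen q.2 true) q.1 _
  · exact myImpOpen (myExistsOpen _) r.2.1 _
end

section
/- Let X be a locally Polish space. Then there exists a Borel function σ from the set of nonempty closed subsets of X (with the Effros Borel σ-algebra) to X such that σ(A) ∈ A for every nonempty closed subset A of X. -/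
open TopologicalSpace

namespace KRNAux

open Metric Set Filter Topology

/-- Nonempty closed subsets. -/
abbrev NC (Y : Type*) [TopologicalSpace Y] := {F : Closeds Y // (F : Set Y).Nonempty}

variable {Y : Type*} [MetricSpace Y]

lemma exists_idx {x : ℕ → Y} (hx : DenseRange x) {r : ℝ} (hr : 0 < r)
    {s : Set Y} (hs : s.Nonempty) : ∃ n, (s ∩ Metric.ball (x n) r).Nonempty := by
  obtain ⟨y, hy⟩ := hs
  obtain ⟨n, hn⟩ := hx.exists_dist_lt y hr
  exact ⟨n, y, hy, by simpa [Metric.mem_ball] using hn⟩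

private lemma half_pow_pos (k : ℕ) : (0:ℝ) < (1/2)^k := by positivity

open Classical in
/-- The decreasing sequence of nonempty sets used in the selection scheme. -/
noncomputable def g (x : ℕ → Y) (hx : DenseRange x) :
    ℕ → {s : Set Y // s.Nonempty} → {s : Set Y // s.Nonempty}
  | 0, s => s
  | (k+1), s =>
    ⟨(g x hx k s).1 ∩
        Metric.ball (x (Nat.find (exists_idx hx (half_pow_pos k) (g x hx k s).2))) ((1/2:ℝ)^k),
      Nat.find_spec (exists_idx hx (half_pow_pos k) (g x hx k s).2)⟩

open Classical in
/-- The index chosen at stage `k`. -/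
noncomputable def idx (x : ℕ → Y) (hx : DenseRange x) (k : ℕ)
    (s : {s : Set Y // s.Nonempty}) : ℕ :=
  Nat.find (exists_idx hx (half_pow_pos k) (g x hx k s).2)

lemma g_succ (x : ℕ → Y) (hx : DenseRange x) (k : ℕ) (s : {s : Set Y // s.Nonempty}) :
    (g x hx (k+1) s).1 = (g x hx k s).1 ∩ Metric.ball (x (idx x hx k s)) ((1/2:ℝ)^k) := rfl

lemma g_succ_subset (x : ℕ → Y) (hx : DenseRange x) (k : ℕ) (s : {s : Set Y // s.Nonempty}) :
    (g x hx (k+1) s).1 ⊆ (g x hx k s).1 := by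
  rw [g_succ]; exact Set.inter_subset_left

lemma g_subset_ball (x : ℕ → Y) (hx : DenseRange x) (k : ℕ) (s : {s : Set Y // s.Nonempty}) :
    (g x hx (k+1) s).1 ⊆ Metric.ball (x (idx x hx k s)) ((1/2:ℝ)^k) := by
  rw [g_succ]; exact Set.inter_subset_right

lemma g_subset (x : ℕ → Y) (hx : DenseRange x) (k : ℕ) (s : {s : Set Y // s.Nonempty}) :
    (g x hx k s).1 ⊆ s.1 := by
  induction k with
  | zero => exact subset_rfl
  | succ k ih => exact (g_succ_subset x hx k s).trans ih

/-- `A ↦ ⟨A, hA⟩` viewed as a nonempty set. -/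
abbrev toNE (A : NC Y) : {s : Set Y // s.Nonempty} := ⟨(A.1 : Set Y), A.2⟩

lemma measurableSet_g (x : ℕ → Y) (hx : DenseRange x) :
    ∀ (k : ℕ) (U : Set Y), IsOpen U →
      MeasurableSet {A : NC Y | ((g x hx k (toNE A)).1 ∩ U).Nonempty} := by
  intro k
  induction k with
  | zero =>
    intro U hU
    have h : {A : NC Y | ((g x hx 0 (toNE A)).1 ∩ U).Nonempty} =
        Subtype.val ⁻¹' {F : Closeds Y | ((F : Set Y) ∩ U).Nonempty} := rfl
    rw [h]
    exact measurable_subtype_coe (MeasurableSpace.measurableSet_generateFrom ⟨U, hU, rfl⟩)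
  | succ k ih =>
    intro U hU
    classical
    have hidx : ∀ n, MeasurableSet {A : NC Y | idx x hx k (toNE A) = n} := by
      intro n
      have h : {A : NC Y | idx x hx k (toNE A) = n} =
          {A : NC Y | ((g x hx k (toNE A)).1 ∩ Metric.ball (x n) ((1/2:ℝ)^k)).Nonempty} ∩
            ⋂ (m : ℕ) (_ : m < n),
              {A : NC Y | ((g x hx k (toNE A)).1 ∩ Metric.ball (x m) ((1/2:ℝ)^k)).Nonempty}ᶜ := by
        ext A
        simp only [Set.mem_setOf_eq, Set.mem_inter_iff, Set.mem_iInter, Set.mem_compl_iff,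
          idx, Nat.find_eq_iff]
      rw [h]
      exact (ih _ isOpen_ball).inter
        (MeasurableSet.iInter fun m => MeasurableSet.iInter fun _ => (ih _ isOpen_ball).compl)
    have h : {A : NC Y | ((g x hx (k+1) (toNE A)).1 ∩ U).Nonempty} =
        ⋃ n, {A : NC Y | idx x hx k (toNE A) = n} ∩
          {A : NC Y | ((g x hx k (toNE A)).1 ∩ (Metric.ball (x n) ((1/2:ℝ)^k) ∩ U)).Nonempty} := by
      ext A
      simp only [Set.mem_setOf_eq, Set.mem_iUnion, Set.mem_inter_iff]
      constructor
      · intro hA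
        refine ⟨idx x hx k (toNE A), rfl, ?_⟩
        rw [g_succ] at hA
        rwa [← Set.inter_assoc]
      · rintro ⟨n, hn, hA⟩
        rw [g_succ, hn]
        rwa [← Set.inter_assoc] at hA
    rw [h]
    exact MeasurableSet.iUnion fun n => (hidx n).inter (ih _ (isOpen_ball.inter hU))

lemma measurable_idx (x : ℕ → Y) (hx : DenseRange x) (k : ℕ) :
    Measurable fun A : NC Y => idx x hx k (toNE A) := by
  classical
  apply measurable_to_nat
  intro A
  set n := idx x hx k (toNE A) with hn
  have h : (fun A : NC Y => idx x hx k (toNE A)) ⁻¹' {n} =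
      {A : NC Y | ((g x hx k (toNE A)).1 ∩ Metric.ball (x n) ((1/2:ℝ)^k)).Nonempty} ∩
        ⋂ (m : ℕ) (_ : m < n),
          {A : NC Y | ((g x hx k (toNE A)).1 ∩ Metric.ball (x m) ((1/2:ℝ)^k)).Nonempty}ᶜ := by
    ext A'
    simp only [Set.mem_preimage, Set.mem_singleton_iff, Set.mem_inter_iff, Set.mem_setOf_eq,
      Set.mem_iInter, Set.mem_compl_iff, idx, Nat.find_eq_iff]
  rw [h]
  exact ((measurableSet_g x hx k _ isOpen_ball).inter
    (MeasurableSet.iInter fun m => MeasurableSet.iInter fun _ =>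
      (measurableSet_g x hx k _ isOpen_ball).compl))

lemma dist_centers (x : ℕ → Y) (hx : DenseRange x) (s : {s : Set Y // s.Nonempty}) (k : ℕ) :
    dist (x (idx x hx k s)) (x (idx x hx (k+1) s)) ≤ 2 * (1/2:ℝ)^k := by
  obtain ⟨y, hy⟩ := (g x hx (k+2) s).2
  have h1 : y ∈ Metric.ball (x (idx x hx (k+1) s)) ((1/2:ℝ)^(k+1)) :=
    g_subset_ball x hx (k+1) s hy
  have h2 : y ∈ Metric.ball (x (idx x hx k s)) ((1/2:ℝ)^k) :=
    g_subset_ball x hx k s (g_succ_subset x hx (k+1) s hy)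
  rw [Metric.mem_ball] at h1 h2
  have h3 := dist_triangle (x (idx x hx k s)) y (x (idx x hx (k+1) s))
  have h4 : dist (x (idx x hx k s)) y = dist y (x (idx x hx k s)) := dist_comm _ _
  have h5 : ((1/2:ℝ))^(k+1) ≤ (1/2)^k := by
    apply pow_le_pow_of_le_one <;> norm_num
  linarith

lemma selector_aux [CompleteSpace Y] [MeasurableSpace Y] [BorelSpace Y]
    (x : ℕ → Y) (hx : DenseRange x) :
    ∃ σ : NC Y → Y, Measurable σ ∧ ∀ A : NC Y, σ A ∈ (A.1 : Set Y) := by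
  classical
  set c : ℕ → NC Y → Y := fun k A => x (idx x hx k (toNE A)) with hc
  have hcauchy : ∀ A : NC Y, CauchySeq (fun k => c k A) := by
    intro A
    exact cauchySeq_of_le_geometric (1/2) 2 (by norm_num) (fun k => dist_centers x hx (toNE A) k)
  have hlim : ∀ A : NC Y, ∃ y, Tendsto (fun k => c k A) atTop (𝓝 y) :=
    fun A => cauchySeq_tendsto_of_complete (hcauchy A)
  choose σ hσ using hlim
  refine ⟨σ, ?_, ?_⟩
  · refine measurable_of_tendsto_metrizable (fun k => ?_) (tendsto_pi_nhds.2 hσ)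
    exact measurable_from_top.comp (measurable_idx x hx k)
  · intro A
    have hy : ∀ k, ∃ y, y ∈ (g x hx (k+1) (toNE A)).1 := fun k => (g x hx (k+1) (toNE A)).2
    choose y hyg using hy
    have hymem : ∀ k, y k ∈ (A.1 : Set Y) := fun k => g_subset x hx (k+1) (toNE A) (hyg k)
    have hyd : ∀ k, dist (y k) (c k A) ≤ (1/2:ℝ)^k := by
      intro k
      have := g_subset_ball x hx k (toNE A) (hyg k)
      rw [Metric.mem_ball] at this
      exact this.le
    have hdist0 : Tendsto (fun k => dist (y k) (σ A)) atTop (𝓝 0) := by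
      have h1 : Tendsto (fun k => dist (c k A) (σ A)) atTop (𝓝 0) :=
        tendsto_iff_dist_tendsto_zero.1 (hσ A)
      have h2 : Tendsto (fun k => ((1/2:ℝ)^k + dist (c k A) (σ A))) atTop (𝓝 0) := by
        have := (tendsto_pow_atTop_nhds_zero_of_lt_one (by norm_num : (0:ℝ) ≤ 1/2)
          (by norm_num : (1/2:ℝ) < 1)).add h1
        simpa using this
      refine squeeze_zero (fun k => dist_nonneg) (fun k => ?_) h2
      calc dist (y k) (σ A) ≤ dist (y k) (c k A) + dist (c k A) (σ A) := dist_triangle _ _ _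
        _ ≤ (1/2:ℝ)^k + dist (c k A) (σ A) := by linarith [hyd k]
    have hyt : Tendsto y atTop (𝓝 (σ A)) := tendsto_iff_dist_tendsto_zero.2 hdist0
    exact A.1.isClosed.mem_of_tendsto hyt (Filter.Eventually.of_forall hymem)

/-- Measurable selector on a Polish space for the Effros Borel structure. -/
lemma polish_selector (Y : Type*) [TopologicalSpace Y] [PolishSpace Y]
    [MeasurableSpace Y] [BorelSpace Y] :
    ∃ σ : NC Y → Y, Measurable σ ∧ ∀ A : NC Y, σ A ∈ (A.1 : Set Y) := by
  rcases isEmpty_or_nonempty Y with hY | hY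
  · haveI : IsEmpty (NC Y) := ⟨fun A => IsEmpty.false A.2.choose⟩
    exact ⟨fun A => A.2.choose, measurable_of_empty _, fun A => A.2.choose_spec⟩
  · letI := upgradeIsCompletelyMetrizable Y
    obtain ⟨x, hx⟩ := exists_dense_seq Y
    exact selector_aux x hx

end KRNAux

open KRNAux Set in
/-- If `X` is locally Polish then there is a Borel map `σ` from the space of nonempty
closed subsets of `X` (with the Effros Borel σ-algebra) to `X` such that `σ A ∈ A`
for every nonempty closed set `A`. -/
theorem exists_borel_selector (X : Type*) [TopologicalSpace X]
    [MeasurableSpace X] [BorelSpace X] (hX : LocallyPolish X) :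
    ∃ σ : {F : Closeds X // (F : Set X).Nonempty} → X,
      Measurable σ ∧ ∀ A : {F : Closeds X // (F : Set X).Nonempty}, σ A ∈ (A.1 : Set X) := by
  classical
  obtain ⟨B, hBc, hBb, hBp⟩ := hX
  rcases isEmpty_or_nonempty X with hE | hNE
  · haveI : IsEmpty {F : Closeds X // (F : Set X).Nonempty} :=
      ⟨fun A => IsEmpty.false A.2.choose⟩
    exact ⟨fun A => A.2.choose, measurable_of_empty _, fun A => A.2.choose_spec⟩
  · obtain ⟨x₀⟩ := hNE
    have hBne : B.Nonempty := by
      have hx₀ : x₀ ∈ ⋃₀ B := by rw [hBb.sUnion_eq]; trivial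
      obtain ⟨U, hU, -⟩ := hx₀
      exact ⟨U, hU⟩
    obtain ⟨u, hu⟩ := hBc.exists_eq_range hBne
    have humem : ∀ n, u n ∈ B := fun n => hu ▸ Set.mem_range_self n
    have hPolish : ∀ n, PolishSpace (u n) := fun n => hBp _ (humem n)
    have hOpen : ∀ n, IsOpen (u n) := fun n => hBb.isOpen (humem n)
    -- restriction maps
    set ρ : ∀ n, Closeds X → Closeds (u n) := fun n F =>
      ⟨Subtype.val ⁻¹' (F : Set X), F.isClosed.preimage continuous_subtype_val⟩ with hρdef
    have hρ : ∀ n, Measurable (ρ n) := by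
      intro n
      apply measurable_generateFrom
      rintro S ⟨V, hV, rfl⟩
      have h : ρ n ⁻¹' {G : Closeds (u n) | ((G : Set (u n)) ∩ V).Nonempty} =
          {F : Closeds X | ((F : Set X) ∩ (Subtype.val '' V)).Nonempty} := by
        ext F
        simp only [Set.mem_preimage, Set.mem_setOf_eq, hρdef]
        constructor
        · rintro ⟨y, hy1, hy2⟩
          exact ⟨y.1, hy1, y, hy2, rfl⟩
        · rintro ⟨z, hz1, y, hy, rfl⟩
          exact ⟨y, hz1, hy⟩
      rw [h]
      exact MeasurableSpace.measurableSet_generateFrom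
        ⟨Subtype.val '' V, (hOpen n).isOpenMap_subtype_val V hV, rfl⟩
    -- selectors on the pieces
    have hsel : ∀ n, ∃ σn : NC (u n) → (u n),
        Measurable σn ∧ ∀ G : NC (u n), σn G ∈ (G.1 : Set (u n)) := by
      intro n
      haveI := hPolish n
      exact polish_selector (u n)
    choose sel hselm hselmem using hsel
    -- existence of an index
    have hNex : ∀ A : {F : Closeds X // (F : Set X).Nonempty},
        ∃ n, ((A.1 : Set X) ∩ u n).Nonempty := by
      intro A
      obtain ⟨y, hy⟩ := A.2
      have hy' : y ∈ ⋃₀ B := by rw [hBb.sUnion_eq]; trivial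
      obtain ⟨U, hU, hyU⟩ := hy'
      rw [hu] at hU
      obtain ⟨n, rfl⟩ := hU
      exact ⟨n, y, hy, hyU⟩
    set N : {F : Closeds X // (F : Set X).Nonempty} → ℕ := fun A => Nat.find (hNex A) with hNdef
    have hrestr : ∀ n (A : {F : Closeds X // (F : Set X).Nonempty}),
        ((A.1 : Set X) ∩ u n).Nonempty → ((ρ n A.1 : Set (u n))).Nonempty := by
      rintro n A ⟨y, hyA, hyu⟩
      exact ⟨⟨y, hyu⟩, hyA⟩
    set f : ℕ → {F : Closeds X // (F : Set X).Nonempty} → X := fun n A =>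
      if h : ((A.1 : Set X) ∩ u n).Nonempty then
        (sel n ⟨ρ n A.1, hrestr n A h⟩ : (u n)).1
      else x₀ with hfdef
    refine ⟨fun A => f (N A) A, ?_, ?_⟩
    · -- measurability
      have hP : ∀ n, MeasurableSet {A : {F : Closeds X // (F : Set X).Nonempty} |
          ((A.1 : Set X) ∩ u n).Nonempty} := by
        intro n
        have h : {A : {F : Closeds X // (F : Set X).Nonempty} | ((A.1 : Set X) ∩ u n).Nonempty} =
            Subtype.val ⁻¹' {F : Closeds X | ((F : Set X) ∩ u n).Nonempty} := rfl
        rw [h]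
        exact measurable_subtype_coe
          (MeasurableSpace.measurableSet_generateFrom ⟨u n, hOpen n, rfl⟩)
      have hfm : ∀ n, Measurable (f n) := by
        intro n
        apply measurable_of_restrict_of_restrict_compl (hP n)
        · have h1 : Set.restrict {A : {F : Closeds X // (F : Set X).Nonempty} |
              ((A.1 : Set X) ∩ u n).Nonempty} (f n) =
              fun A' => (sel n ⟨ρ n A'.1.1, hrestr n A'.1 A'.2⟩ : (u n)).1 := by
            funext A'
            simp only [Set.restrict_apply, hfdef]
            exact dif_pos A'.2
          rw [show Set.domRestrict _ (f n) = _ from h1]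
          exact measurable_subtype_coe.comp ((hselm n).comp
            (Measurable.subtype_mk ((hρ n).comp
              (measurable_subtype_coe.comp measurable_subtype_coe))))
        · have h2 : Set.restrict {A : {F : Closeds X // (F : Set X).Nonempty} |
              ((A.1 : Set X) ∩ u n).Nonempty}ᶜ (f n) = fun _ => x₀ := by
            funext A'
            simp only [Set.restrict_apply, hfdef]
            exact dif_neg A'.2
          rw [show Set.domRestrict _ (f n) = _ from h2]
          exact measurable_const
      have hNm : ∀ n, MeasurableSet {A : {F : Closeds X // (F : Set X).Nonempty} | N A = n} := by
        intro n
        have h : {A : {F : Closeds X // (F : Set X).Nonempty} | N A = n} =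
            {A | ((A.1 : Set X) ∩ u n).Nonempty} ∩
              ⋂ (m : ℕ) (_ : m < n), {A : {F : Closeds X // (F : Set X).Nonempty} |
                ((A.1 : Set X) ∩ u m).Nonempty}ᶜ := by
          ext A
          simp only [Set.mem_setOf_eq, Set.mem_inter_iff, Set.mem_iInter, Set.mem_compl_iff,
            hNdef, Nat.find_eq_iff]
        rw [h]
        exact (hP n).inter
          (MeasurableSet.iInter fun m => MeasurableSet.iInter fun _ => (hP m).compl)
      intro s hs
      have h : (fun A => f (N A) A) ⁻¹' s =
          ⋃ n, {A : {F : Closeds X // (F : Set X).Nonempty} | N A = n} ∩ (f n ⁻¹' s) := by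
        ext A
        simp only [Set.mem_preimage, Set.mem_iUnion, Set.mem_inter_iff, Set.mem_setOf_eq]
        constructor
        · intro hA
          exact ⟨N A, rfl, hA⟩
        · rintro ⟨n, hn, hA⟩
          rwa [hn]
      rw [h]
      exact MeasurableSet.iUnion fun n => (hNm n).inter ((hfm n) hs)
    · -- membership
      intro A
      show f (N A) A ∈ (A.1 : Set X)
      have hNA : ((A.1 : Set X) ∩ u (N A)).Nonempty := Nat.find_spec (hNex A)
      have h : f (N A) A = (sel (N A) ⟨ρ (N A) A.1, hrestr (N A) A hNA⟩ : (u (N A))).1 := by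
        simp only [hfdef, dif_pos hNA]
      rw [h]
      have := hselmem (N A) ⟨ρ (N A) A.1, hrestr (N A) A hNA⟩
      exact this
end

section
/- Let G be a second countable topological space, Y a Polish space, and let r, s : G → Y be continuous open surjections such that the fiber s⁻¹({x}) is a Baire space (in the subspace topology) for every x ∈ Y. If A ⊆ Y is meager, then the set of x ∈ Y such that {γ ∈ s⁻¹({x}) : r(γ) ∈ A} is nonmeager in the subspace s⁻¹({x}) is a meager subset of Y. -/
open Set TopologicalSpace

/-- The boundary part `closure W \ W` of an open set `W` is nowhere dense. -/
lemma aux_closure_diff_nwd {X : Type*} [TopologicalSpace X] {W : Set X} (hW : IsOpen W) :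
    IsNowhereDense (closure W \ W) := by
  have hc : IsClosed (closure W \ W) := isClosed_closure.sdiff hW
  rw [hc.isNowhereDense_iff, eq_empty_iff_forall_notMem]
  intro y hy
  have hy' : y ∈ closure W \ W := interior_subset hy
  obtain ⟨z, hz1, hz2⟩ := mem_closure_iff.1 hy'.1 _ isOpen_interior hy
  exact (interior_subset hz1).2 hz2

/-- Preimage of the closure of a nowhere dense set under a continuous open map has
empty interior. -/
lemma aux_preimage_nwd {X Y : Type*} [TopologicalSpace X] [TopologicalSpace Y]
    {f : X → Y} (hc : Continuous f) (ho : IsOpenMap f) {t : Set Y}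
    (ht : IsNowhereDense t) : interior (f ⁻¹' closure t) = ∅ := by
  rw [eq_empty_iff_forall_notMem]
  intro g hg
  have h1 : f '' interior (f ⁻¹' closure t) ⊆ closure t :=
    (image_mono interior_subset).trans (image_preimage_subset _ _)
  have h2 : f '' interior (f ⁻¹' closure t) ⊆ interior (closure t) :=
    (ho _ isOpen_interior).subset_interior_iff.mpr h1
  have : f g ∈ interior (closure t) := h2 ⟨g, hg, rfl⟩
  rw [ht] at this
  exact this

/-- If `F` is closed with empty interior and `U` is open, then `s '' (U \ F)` is dense
in `s '' U` for an arbitrary map `s`. -/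
lemma aux_dense {X Y : Type*} [TopologicalSpace X] [TopologicalSpace Y]
    {s : X → Y} (hsc : Continuous s) {F U : Set X} (hFi : interior F = ∅)
    (hU : IsOpen U) : s '' U ⊆ closure (s '' (U \ F)) := by
  rintro _ ⟨g, hgU, rfl⟩
  rw [mem_closure_iff]
  intro o ho hso
  have hopen : IsOpen (U ∩ s ⁻¹' o) := hU.inter (ho.preimage hsc)
  have hne : ((U ∩ s ⁻¹' o) \ F).Nonempty := by
    by_contra h
    rw [not_nonempty_iff_eq_empty, diff_eq_empty] at h
    have : U ∩ s ⁻¹' o ⊆ interior F := hopen.subset_interior_iff.mpr h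
    rw [hFi] at this
    exact this ⟨hgU, hso⟩
  obtain ⟨g', ⟨hg'U, hg'o⟩, hg'F⟩ := hne
  exact ⟨s g', hg'o, ⟨g', ⟨hg'U, hg'F⟩, rfl⟩⟩

/-- Let `G` be second countable, `Y` Polish, and `r, s : G → Y` continuous open
surjections such that every fiber of `s` is a Baire space. If `A ⊆ Y` is meager, then
the set of `x ∈ Y` such that `{γ ∈ s⁻¹(x) : r γ ∈ A}` is nonmeager in `s⁻¹(x)` is
meager in `Y`. -/
theorem meager_vaught_transform {G Y : Type*} [TopologicalSpace G]
    [SecondCountableTopology G] [TopologicalSpace Y] [PolishSpace Y]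
    (r s : G → Y)
    (hrc : Continuous r) (hro : IsOpenMap r) (hrsurj : Function.Surjective r)
    (hsc : Continuous s) (hso : IsOpenMap s) (hssurj : Function.Surjective s)
    (hBaire : ∀ x : Y, BaireSpace (s ⁻¹' {x}))
    (A : Set Y) (hA : IsMeagre A) :
    IsMeagre {x : Y | ¬ IsMeagre {γ : (s ⁻¹' {x} : Set G) | r (γ : G) ∈ A}} := by
  obtain ⟨S, hSnd, hScount, hSsub⟩ := isMeagre_iff_countable_union_isNowhereDense.mp hA
  -- For `t ∈ S`, `F t := r ⁻¹' closure t` is closed with empty interior in `G`.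
  set F : Set Y → Set G := fun t => r ⁻¹' closure t with hF
  have hFc : ∀ t, IsClosed (F t) := fun t => isClosed_closure.preimage hrc
  have hFi : ∀ t ∈ S, interior (F t) = ∅ := fun t ht => aux_preimage_nwd hrc hro (hSnd t ht)
  -- the "bad" nowhere dense sets in Y
  set N : Set Y → Set G → Set Y :=
    fun t U => closure (s '' (U \ F t)) \ s '' (U \ F t) with hN
  set S' : Set (Set Y) := (fun p : Set Y × Set G => N p.1 p.2) '' (S ×ˢ countableBasis G)
    with hS'
  rw [isMeagre_iff_countable_union_isNowhereDense]
  refine ⟨S', ?_, (hScount.prod (countable_countableBasis G)).image _, ?_⟩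
  · rintro _ ⟨⟨t, U⟩, ⟨htS, hUb⟩, rfl⟩
    exact aux_closure_diff_nwd (hso _ ((isOpen_of_mem_countableBasis hUb).sdiff (hFc t)))
  · intro x hx
    by_contra hxM
    apply hx
    -- `x` avoids all bad sets; show the fiber trace is meager.
    have hxN : ∀ t ∈ S, ∀ U ∈ countableBasis G, x ∉ N t U := by
      intro t ht U hU hmem
      exact hxM ⟨N t U, ⟨⟨t, U⟩, ⟨ht, hU⟩, rfl⟩, hmem⟩
    rw [isMeagre_iff_countable_union_isNowhereDense]
    refine ⟨(fun t => (Subtype.val ⁻¹' (F t) : Set (s ⁻¹' {x} : Set G))) '' S,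
      ?_, hScount.image _, ?_⟩
    · rintro _ ⟨t, htS, rfl⟩
      have hKc : IsClosed (Subtype.val ⁻¹' (F t) : Set (s ⁻¹' {x} : Set G)) :=
        (hFc t).preimage continuous_subtype_val
      rw [hKc.isNowhereDense_iff, eq_empty_iff_forall_notMem]
      intro γ hγ
      obtain ⟨O, hO, hOeq⟩ := isOpen_induced_iff.mp
        (isOpen_interior (s := (Subtype.val ⁻¹' (F t) : Set (s ⁻¹' {x} : Set G))))
      have hγO : (γ : G) ∈ O := by rw [← hOeq] at hγ; exact hγ
      obtain ⟨U, hUb, hγU, hUO⟩ :=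
        (isBasis_countableBasis G).exists_subset_of_mem_open hγO hO
      have hγx : s (γ : G) = x := γ.2
      have hxU : x ∈ s '' U := ⟨γ, hγU, hγx⟩
      have hxcl : x ∈ closure (s '' (U \ F t)) :=
        aux_dense hsc (hFi t htS) (isOpen_of_mem_countableBasis hUb) hxU
      have hxW : x ∉ s '' (U \ F t) := by
        rintro ⟨g, ⟨hgU, hgF⟩, hgx⟩
        have hgfib : g ∈ s ⁻¹' ({x} : Set Y) := by simp [hgx]
        have : (⟨g, hgfib⟩ : (s ⁻¹' {x} : Set G)) ∈
            interior (Subtype.val ⁻¹' (F t) : Set (s ⁻¹' {x} : Set G)) := by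
          rw [← hOeq]; exact hUO hgU
        have h3 : (⟨g, hgfib⟩ : (s ⁻¹' {x} : Set G)) ∈
            (Subtype.val ⁻¹' (F t) : Set (s ⁻¹' {x} : Set G)) := interior_subset this
        exact hgF h3
      exact hxN t htS U hUb ⟨hxcl, hxW⟩
    · intro γ hγ
      obtain ⟨t, htS, hγt⟩ := hSsub hγ
      exact ⟨_, ⟨t, htS, rfl⟩, subset_closure hγt⟩
end

section
/- Let X be a Polish space and E an equivalence relation on X such that the E-saturation of every open subset of X is open. Define the relation Ē on X by (x, y) ∈ Ē if and only if the closures of the E-classes of x and y coincide. Then Ē is a Gδ subset of X × X and E ⊆ Ē. -/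
/-- Let `X` be Polish and `E` an equivalence relation whose saturations of open sets
are open. The relation `Ē`, holding when the closures of the `E`-classes coincide, is
a Gδ subset of `X × X` and contains `E`. -/
theorem closure_relation_isGδ {X : Type*} [TopologicalSpace X] [PolishSpace X]
    (E : X → X → Prop) (hE : Equivalence E)
    (hsat : ∀ U : Set X, IsOpen U → IsOpen {y : X | ∃ x ∈ U, E y x}) :
    IsGδ {p : X × X | closure {z : X | E z p.1} = closure {z : X | E z p.2}} ∧
    ∀ x y : X, E x y →
      closure {z : X | E z x} = closure {z : X | E z y} := by
  have hclass : ∀ x y : X, E x y → {z : X | E z x} = {z : X | E z y} := by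
    intro x y hxy
    ext z
    exact ⟨fun h => hE.trans h hxy, fun h => hE.trans h (hE.symm hxy)⟩
  refine ⟨?_, fun x y hxy => by rw [hclass x y hxy]⟩
  obtain ⟨b, hbc, -, hb⟩ := TopologicalSpace.exists_countable_basis X
  set S : Set X → Set X := fun U => {y : X | ∃ x ∈ U, E y x} with hS
  have hmem : ∀ (x : X) (U : Set X), x ∈ S U ↔ ({z : X | E z x} ∩ U).Nonempty := by
    intro x U
    constructor
    · rintro ⟨u, hu, hxu⟩
      exact ⟨u, hE.symm hxu, hu⟩
    · rintro ⟨z, hz, hzU⟩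
      exact ⟨z, hzU, hE.symm hz⟩
  have hmeet : ∀ (A U : Set X), IsOpen U → ((closure A ∩ U).Nonempty ↔ (A ∩ U).Nonempty) := by
    intro A U hU
    constructor
    · rintro ⟨z, hz, hzU⟩
      have hcl : z ∈ closure (U ∩ A) := hU.inter_closure ⟨hzU, hz⟩
      obtain ⟨w, hw⟩ := (closure_nonempty_iff).mp ⟨z, hcl⟩
      exact ⟨w, hw.2, hw.1⟩
    · exact fun h => h.mono (Set.inter_subset_inter_left _ subset_closure)
  have hset : {p : X × X | closure {z : X | E z p.1} = closure {z : X | E z p.2}} =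
      ⋂ U ∈ b, ((S U ×ˢ S U) ∪ ((S U)ᶜ ×ˢ (S U)ᶜ)) := by
    ext p
    simp only [Set.mem_setOf_eq, Set.mem_iInter]
    constructor
    · intro h U hU
      have h1 : p.1 ∈ S U ↔ p.2 ∈ S U := by
        rw [hmem, hmem, ← hmeet _ U (hb.isOpen hU), h]
        exact hmeet _ U (hb.isOpen hU)
      by_cases hp : p.1 ∈ S U
      · exact Or.inl ⟨hp, h1.mp hp⟩
      · exact Or.inr ⟨hp, fun h2 => hp (h1.mpr h2)⟩
    · intro h
      have hiff : ∀ U ∈ b,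
          (({z : X | E z p.1} ∩ U).Nonempty ↔ ({z : X | E z p.2} ∩ U).Nonempty) := by
        intro U hU
        rw [← hmem, ← hmem]
        rcases h U hU with ⟨h1, h2⟩ | ⟨h1, h2⟩
        · exact ⟨fun _ => h2, fun _ => h1⟩
        · exact ⟨fun hx => absurd hx h1, fun hx => absurd hx h2⟩
      ext x
      rw [hb.mem_closure_iff, hb.mem_closure_iff]
      constructor
      · intro hx U hU hxU
        have h2 := hx U hU hxU
        rw [Set.inter_comm] at h2 ⊢
        exact (hiff U hU).mp h2
      · intro hx U hU hxU
        have h2 := hx U hU hxU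
        rw [Set.inter_comm] at h2 ⊢
        exact (hiff U hU).mpr h2
  rw [hset]
  refine .biInter hbc fun U hU => ?_
  have hSU : IsOpen (S U) := hsat U (hb.isOpen hU)
  letI := TopologicalSpace.upgradeIsCompletelyMetrizable (X × X)
  exact ((hSU.prod hSU).isGδ).union ((hSU.isClosed_compl.prod hSU.isClosed_compl).isGδ)
end

section
/- Let X be a Polish space and E an equivalence relation on X such that the E-saturation of every open subset of X is open and every E-class is a Gδ subset of X. If x, y ∈ X are such that [x] ≠ [y] and [y] meets the closure of [x], then the closure of [y] is disjoint from [x]. -/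
open Set

lemma isGδ_preimage' {X Y : Type*} [TopologicalSpace X] [TopologicalSpace Y]
    {f : X → Y} (hf : Continuous f) {s : Set Y} (hs : IsGδ s) : IsGδ (f ⁻¹' s) := by
  rw [isGδ_iff_eq_iInter_nat] at hs
  obtain ⟨g, hg, rfl⟩ := hs
  rw [preimage_iInter]
  exact IsGδ.iInter_of_isOpen fun n => (hg n).preimage hf

lemma class_subset_closure {X : Type*} [TopologicalSpace X]
    (E : X → X → Prop) (hE : Equivalence E)
    (hsat : ∀ U : Set X, IsOpen U → IsOpen {y : X | ∃ x ∈ U, E y x})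
    (a b : X) (hmeet : ({z : X | E z b} ∩ closure {z : X | E z a}).Nonempty) :
    {z : X | E z b} ⊆ closure {z : X | E z a} := by
  obtain ⟨c, hcb, hcc⟩ := hmeet
  intro w hwb
  rw [mem_closure_iff]
  intro U hU hwU
  have hcS : c ∈ {p : X | ∃ q ∈ U, E p q} := ⟨w, hwU, hE.trans hcb (hE.symm hwb)⟩
  rw [mem_closure_iff] at hcc
  obtain ⟨p, hpS, hpa⟩ := hcc _ (hsat U hU) hcS
  obtain ⟨q, hqU, hpq⟩ := hpS
  exact ⟨q, hqU, hE.trans (hE.symm hpq) hpa⟩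

/-- Let `X` be Polish and `E` an equivalence relation with open saturations of open
sets and Gδ classes. If `[x] ≠ [y]` and `[y]` meets the closure of `[x]`, then the
closure of `[y]` is disjoint from `[x]`. -/
theorem closure_class_disjoint {X : Type*} [TopologicalSpace X] [PolishSpace X]
    (E : X → X → Prop) (hE : Equivalence E)
    (hsat : ∀ U : Set X, IsOpen U → IsOpen {y : X | ∃ x ∈ U, E y x})
    (hGδ : ∀ x : X, IsGδ {y : X | E y x})
    (x y : X) (hne : {z : X | E z x} ≠ {z : X | E z y})
    (hmeet : ({z : X | E z y} ∩ closure {z : X | E z x}).Nonempty) :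
    closure {z : X | E z y} ∩ {z : X | E z x} = ∅ := by
  by_contra h
  obtain ⟨w, hwc, hwx⟩ := nonempty_iff_ne_empty.2 h
  -- [y] ⊆ closure [x] and [x] ⊆ closure [y]
  have h1 : {z : X | E z y} ⊆ closure {z : X | E z x} :=
    class_subset_closure E hE hsat x y hmeet
  have h2 : {z : X | E z x} ⊆ closure {z : X | E z y} :=
    class_subset_closure E hE hsat y x ⟨w, hwx, hwc⟩
  have hC : closure {z : X | E z x} = closure {z : X | E z y} := by
    apply subset_antisymm
    · exact closure_minimal h2 isClosed_closure
    · exact closure_minimal h1 isClosed_closure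
  set C := closure {z : X | E z x} with hCdef
  have hCclosed : IsClosed C := isClosed_closure
  haveI : PolishSpace C := hCclosed.polishSpace
  haveI : BaireSpace C := by letI := TopologicalSpace.upgradeIsCompletelyMetrizable C; infer_instance
  have hxC : x ∈ C := subset_closure (hE.refl x)
  haveI : Nonempty C := ⟨⟨x, hxC⟩⟩
  have hcont : Continuous ((↑) : C → X) := continuous_subtype_val
  have hGx : IsGδ ((↑) ⁻¹' {z : X | E z x} : Set C) := isGδ_preimage' hcont (hGδ x)
  have hGy : IsGδ ((↑) ⁻¹' {z : X | E z y} : Set C) := isGδ_preimage' hcont (hGδ y)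
  have hDx : Dense ((↑) ⁻¹' {z : X | E z x} : Set C) := by
    rw [Subtype.dense_iff]
    intro c hc
    have : (Subtype.val '' (Subtype.val ⁻¹' {z : X | E z x} : Set C)) = {z : X | E z x} := by
      rw [Subtype.image_preimage_coe]
      exact inter_eq_right.2 subset_closure
    rw [this]; exact hc
  have hDy : Dense ((↑) ⁻¹' {z : X | E z y} : Set C) := by
    rw [Subtype.dense_iff]
    intro c hc
    have : (Subtype.val '' (Subtype.val ⁻¹' {z : X | E z y} : Set C)) = {z : X | E z y} := by
      rw [Subtype.image_preimage_coe]
      exact inter_eq_right.2 (hC ▸ subset_closure)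
    rw [this]; exact hC ▸ hc
  obtain ⟨⟨p, _⟩, hp⟩ := (hDx.inter_of_Gδ hGx hGy hDy).nonempty
  obtain ⟨hpx, hpy⟩ := hp
  exact hne (by
    ext z
    constructor
    · intro hz; exact hE.trans hz (hE.trans (hE.symm hpx) hpy)
    · intro hz; exact hE.trans hz (hE.trans (hE.symm hpy) hpx))
end

section
/- Let X be a Polish space and E an equivalence relation on X such that the E-saturation of every open subset of X is open and every E-class is a Gδ subset of X. Then E is smooth: there is a Borel map f : X → 2^ω such that for all x, y ∈ X, x E y if and only if f(x) = f(y). -/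
private lemma isGδ_preimage_aux {α β : Type*} [TopologicalSpace α] [TopologicalSpace β]
    {s : Set β} (hs : IsGδ s) {f : α → β} (hf : Continuous f) : IsGδ (f ⁻¹' s) := by
  obtain ⟨T, hTo, hTc, rfl⟩ := hs
  rw [Set.preimage_sInter]
  exact IsGδ.biInter_of_isOpen hTc fun t ht => (hTo t ht).preimage hf

/-- Let `X` be Polish and `E` an equivalence relation with open saturations of open
sets whose classes are all Gδ. Then `E` is smooth: there is a Borel reduction of `E`
to equality on the Cantor space `2^ω`. -/
theorem smooth_of_gdelta_classes {X : Type*} [TopologicalSpace X] [PolishSpace X]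
    [MeasurableSpace X] [BorelSpace X]
    (E : X → X → Prop) (hE : Equivalence E)
    (hsat : ∀ U : Set X, IsOpen U → IsOpen {y : X | ∃ x ∈ U, E y x})
    (hGδ : ∀ x : X, IsGδ {y : X | E y x}) :
    ∃ f : X → (ℕ → Bool), Measurable f ∧ ∀ x y : X, E x y ↔ f x = f y := by
  classical
  obtain ⟨B, hBc, hBne, hB⟩ := TopologicalSpace.exists_countable_basis X
  obtain ⟨e, he⟩ := (hBc.insert ∅).exists_eq_range (Set.insert_nonempty _ _)
  set S : ℕ → Set X := fun n => {y : X | ∃ x ∈ e n, E y x} with hS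
  have hSopen : ∀ n, IsOpen (S n) := by
    intro n
    have : e n ∈ insert (∅ : Set X) B := he ▸ Set.mem_range_self n
    rcases this with h | h
    · simp [hS, h]
    · exact hsat _ (hB.isOpen h)
  refine ⟨fun x n => if x ∈ S n then true else false, ?_, ?_⟩
  · refine measurable_pi_lambda _ fun n => ?_
    exact Measurable.ite (hSopen n).measurableSet measurable_const measurable_const
  intro x y
  constructor
  · intro hxy
    funext n
    have : x ∈ S n ↔ y ∈ S n := by
      constructor
      · rintro ⟨z, hz, hxz⟩
        exact ⟨z, hz, hE.trans (hE.symm hxy) hxz⟩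
      · rintro ⟨z, hz, hyz⟩
        exact ⟨z, hz, hE.trans hxy hyz⟩
    simp only [this]
  · intro hf
    have hiff : ∀ n, x ∈ S n ↔ y ∈ S n := by
      intro n
      have := congrFun hf n
      by_cases hx : x ∈ S n <;> by_cases hy : y ∈ S n <;> simp [hx, hy] at this ⊢
    -- key: if profiles agree, each class is contained in the closure of the other
    have key : ∀ a b : X, (∀ n, a ∈ S n ↔ b ∈ S n) →
        {z : X | E z b} ⊆ closure {z : X | E z a} := by
      intro a b hab z hz
      rw [mem_closure_iff]
      intro U hU hzU
      obtain ⟨V, hVB, hzV, hVU⟩ := hB.exists_subset_of_mem_open hzU hU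
      have : V ∈ Set.range e := he ▸ Set.mem_insert_of_mem _ hVB
      obtain ⟨n, rfl⟩ := this
      have hbn : b ∈ S n := ⟨z, hzV, hE.symm hz⟩
      obtain ⟨w, hw, haw⟩ := (hab n).2 hbn
      exact ⟨w, hVU hw, hE.symm haw⟩
    have h1 : {z : X | E z y} ⊆ closure {z : X | E z x} := key x y hiff
    have h2 : {z : X | E z x} ⊆ closure {z : X | E z y} :=
      key y x (fun n => (hiff n).symm)
    set C : Set X := closure {z : X | E z x} with hC
    have hCy : closure {z : X | E z y} = C := by
      apply Set.Subset.antisymm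
      · exact closure_minimal h1 isClosed_closure
      · exact hC ▸ closure_minimal
          (subset_trans h2 (closure_mono (fun z hz => hz))) isClosed_closure
    haveI : PolishSpace C := isClosed_closure.polishSpace
    letI := TopologicalSpace.upgradeIsCompletelyMetrizable C
    have hGx : IsGδ ((Subtype.val : C → X) ⁻¹' {z : X | E z x}) :=
      isGδ_preimage_aux (hGδ x) continuous_subtype_val
    have hGy : IsGδ ((Subtype.val : C → X) ⁻¹' {z : X | E z y}) :=
      isGδ_preimage_aux (hGδ y) continuous_subtype_val
    have hdx : Dense ((Subtype.val : C → X) ⁻¹' {z : X | E z x}) := by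
      rw [Subtype.dense_iff]
      intro c hc
      have : c ∈ C := hc
      rw [Set.image_preimage_eq_inter_range, Subtype.range_val]
      have : ({z : X | E z x} : Set X) ∩ C = {z : X | E z x} := by
        apply Set.inter_eq_self_of_subset_left
        exact subset_closure
      rw [this]
      exact hc
    have hdy : Dense ((Subtype.val : C → X) ⁻¹' {z : X | E z y}) := by
      rw [Subtype.dense_iff]
      intro c hc
      rw [Set.image_preimage_eq_inter_range, Subtype.range_val]
      have heq : ({z : X | E z y} : Set X) ∩ C = {z : X | E z y} :=
        Set.inter_eq_self_of_subset_left h1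
      rw [heq, hCy]
      exact hc
    haveI : Nonempty C := ⟨⟨x, subset_closure (hE.refl x)⟩⟩
    obtain ⟨w, hwx, hwy⟩ := ((hdx.inter_of_Gδ hGx hGy hdy).nonempty : _)
    exact hE.trans (hE.symm hwx) hwy
end

section
/- Let X be a standard Borel space and E an equivalence relation on X. Suppose there is a Borel map f : 2^ω → X such that for all x, y ∈ 2^ω, x E₀ y if and only if f(x) E f(y). Then there exists a Borel probability measure μ on X that is E-ergodic (every E-invariant Borel subset of X is either μ-null or μ-conull) and E-nonatomic (every E-class that is a Borel set has μ-measure zero). -/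
open MeasureTheory ProbabilityTheory Filter Set TopologicalSpace
open scoped ENNReal

namespace E0Erg

instance : AddCommGroup Bool where
  add := xor
  zero := false
  neg := id
  add_assoc := by decide
  zero_add := by decide
  add_zero := by decide
  neg_add_cancel := by decide
  add_comm := by decide
  nsmul := nsmulRec
  zsmul := zsmulRec

instance : ContinuousAdd Bool := ⟨continuous_of_discreteTopology⟩
instance : ContinuousNeg Bool := ⟨continuous_of_discreteTopology⟩

noncomputable def mu0 : Measure (ℕ → Bool) :=
  Measure.addHaarMeasure (⊤ : PositiveCompacts (ℕ → Bool))

instance : IsProbabilityMeasure mu0 := by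
  constructor
  have h := Measure.addHaarMeasure_self (K₀ := (⊤ : PositiveCompacts (ℕ → Bool)))
  rwa [PositiveCompacts.coe_top] at h

instance : mu0.IsAddLeftInvariant := by unfold mu0; infer_instance

def cyl (s : Finset ℕ) (b : ℕ → Bool) : Set (ℕ → Bool) := {x | ∀ i ∈ s, x i = b i}

lemma measurableSet_cyl (s : Finset ℕ) (b : ℕ → Bool) : MeasurableSet (cyl s b) := by
  have : cyl s b = ⋂ i ∈ s, (fun x : ℕ → Bool => x i) ⁻¹' {b i} := by
    ext x; simp [cyl]
  rw [this]
  exact MeasurableSet.biInter (s : Set ℕ).to_countable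
    fun i _ => measurable_pi_apply i (measurableSet_singleton _)

lemma cyl_congr (s : Finset ℕ) (b b' : ℕ → Bool) : mu0 (cyl s b) = mu0 (cyl s b') := by
  have key : ∀ a c x : Bool, ((a + c) + x = a) ↔ (x = c) := by decide
  have hpre : (fun x => (fun i => b i + b' i) + x) ⁻¹' cyl s b = cyl s b' := by
    refine Set.ext fun x => ?_
    simp only [cyl, mem_preimage, mem_setOf_eq, Pi.add_apply]
    exact forall₂_congr fun i _ => key (b i) (b' i) (x i)
  calc mu0 (cyl s b) = mu0 ((fun x => (fun i => b i + b' i) + x) ⁻¹' cyl s b) :=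
        (measure_preimage_add mu0 _ _).symm
    _ = mu0 (cyl s b') := by rw [hpre]

lemma cyl_measure (s : Finset ℕ) (b : ℕ → Bool) :
    mu0 (cyl s b) = 2⁻¹ ^ s.card := by
  induction s using Finset.induction generalizing b with
  | empty =>
      have : cyl ∅ b = univ := by ext x; simp [cyl]
      simp [this]
  | @insert i s hi ih =>
      have hsplit : cyl s b =
          cyl (insert i s) (Function.update b i true) ∪
          cyl (insert i s) (Function.update b i false) := by
        ext x
        simp only [cyl, mem_setOf_eq, mem_union, Finset.mem_insert]
        constructor
        · intro h
          cases hxi : x i with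
          | true =>
              left; rintro j (rfl | hj)
              · simp [hxi]
              · rw [Function.update_of_ne (fun hji : j = i => hi (hji ▸ hj)) _ b]; exact h j hj
          | false =>
              right; rintro j (rfl | hj)
              · simp [hxi]
              · rw [Function.update_of_ne (fun hji : j = i => hi (hji ▸ hj)) _ b]; exact h j hj
        · rintro (h | h) j hj
          · have := h j (Or.inr hj)
            rwa [Function.update_of_ne (fun hji : j = i => hi (hji ▸ hj)) _ b] at this
          · have := h j (Or.inr hj)
            rwa [Function.update_of_ne (fun hji : j = i => hi (hji ▸ hj)) _ b] at this
      have hdisj : Disjoint (cyl (insert i s) (Function.update b i true))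
          (cyl (insert i s) (Function.update b i false)) := by
        rw [Set.disjoint_left]
        intro x hx hx'
        have h1 := hx i (Finset.mem_insert_self i s)
        have h2 := hx' i (Finset.mem_insert_self i s)
        simp [Function.update_self] at h1 h2
        rw [h1] at h2; exact Bool.true_eq_false.mp h2
      have hmeas := measurableSet_cyl (insert i s) (Function.update b i false)
      have hsum : mu0 (cyl s b)
          = mu0 (cyl (insert i s) (Function.update b i true))
            + mu0 (cyl (insert i s) (Function.update b i false)) := by
        rw [hsplit, measure_union hdisj hmeas]
      have heq : mu0 (cyl (insert i s) (Function.update b i true))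
          = mu0 (cyl (insert i s) b) := cyl_congr _ _ _
      have heq' : mu0 (cyl (insert i s) (Function.update b i false))
          = mu0 (cyl (insert i s) b) := cyl_congr _ _ _
      rw [heq, heq', ih b] at hsum
      have h2 : (2 : ℝ≥0∞) * mu0 (cyl (insert i s) b) = 2⁻¹ ^ s.card := by
        rw [two_mul]; exact hsum.symm
      have : mu0 (cyl (insert i s) b) = 2⁻¹ * 2⁻¹ ^ s.card := by
        have := congrArg (fun z => (2 : ℝ≥0∞)⁻¹ * z) h2
        simpa [← mul_assoc, ENNReal.inv_mul_cancel (two_ne_zero) (ENNReal.ofNat_ne_top)]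
          using this
      rw [this, Finset.card_insert_of_notMem hi, pow_succ]
      ring

/-- the π-system of coordinate conditions at `i` -/
def pis (i : ℕ) : Set (Set (ℕ → Bool)) := {S | ∃ c : Bool, S = {x | x i = c}}

lemma isPiSystem_pis (i : ℕ) : IsPiSystem (pis i) := by
  rintro S ⟨c, rfl⟩ T ⟨c', rfl⟩ hne
  obtain ⟨x, hx1, hx2⟩ := hne
  simp only [mem_setOf_eq] at hx1 hx2
  have : c = c' := by rw [← hx1, ← hx2]
  subst this
  exact ⟨c, by ext y; simp⟩

lemma iIndep_coords : iIndep (fun i => MeasurableSpace.generateFrom (pis i)) mu0 := by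
  refine iIndepSets.iIndep (fun i => ?_) pis isPiSystem_pis (fun i => rfl) ?_
  · refine MeasurableSpace.generateFrom_le ?_
    rintro S ⟨c, rfl⟩
    exact measurable_pi_apply (X := fun _ : ℕ => Bool) i (measurableSet_singleton c)
  · refine (iIndepSets_iff pis mu0).2 ?_
    intro u g hg
    have hb : ∀ i, ∃ c : Bool, i ∈ u → g i = {x | x i = c} := by
      intro i
      by_cases hi : i ∈ u
      · obtain ⟨c, hc⟩ := hg i hi
        exact ⟨c, fun _ => hc⟩
      · exact ⟨true, fun h => absurd h hi⟩
    choose b hbspec using hb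
    have hInter : (⋂ i ∈ u, g i) = cyl u b := by
      ext x
      simp only [mem_iInter, cyl, mem_setOf_eq]
      refine forall₂_congr fun i hi => ?_
      rw [hbspec i hi]; rfl
    have hsingle : ∀ i ∈ u, g i = cyl {i} b := by
      intro i hi
      rw [hbspec i hi]
      ext x; simp [cyl]
    rw [hInter, cyl_measure]
    rw [Finset.prod_congr rfl fun i hi => by rw [hsingle i hi, cyl_measure]]
    simp [Finset.prod_const]

lemma tail_meas (n : ℕ) {B : Set (ℕ → Bool)} (hB : MeasurableSet B)
    (hinv : ∀ x y : ℕ → Bool, {k | x k ≠ y k}.Finite → (x ∈ B ↔ y ∈ B)) :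
    MeasurableSet[⨆ i, ⨆ _ : n ≤ i, MeasurableSpace.generateFrom (pis i)] B := by
  set m := ⨆ i, ⨆ _ : n ≤ i, MeasurableSpace.generateFrom (pis i) with hm
  set r : (ℕ → Bool) → (ℕ → Bool) := fun x k => if k < n then false else x k with hrdef
  have hev : ∀ k, @Measurable _ _ (MeasurableSpace.generateFrom (pis k)) _
      (fun x : ℕ → Bool => x k) := by
    intro k
    refine @measurable_to_countable' Bool (ℕ → Bool) _ _
      (MeasurableSpace.generateFrom (pis k)) _ fun c => ?_
    have hpre : ((fun x : ℕ → Bool => x k) ⁻¹' {c}) = {x | x k = c} := rfl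
    rw [hpre]
    exact MeasurableSpace.measurableSet_generateFrom ⟨c, rfl⟩
  have hr : @Measurable _ _ m MeasurableSpace.pi r := by
    refine measurable_pi_lambda r fun k => ?_
    by_cases hk : k < n
    · have : (fun x : ℕ → Bool => r x k) = fun _ => false := by
        funext x; simp [hrdef, hk]
      rw [this]; exact measurable_const
    · have : (fun x : ℕ → Bool => r x k) = fun x => x k := by
        funext x; simp [hrdef, hk]
      rw [this]
      exact (hev k).mono
        (le_iSup₂ (f := fun i (_ : n ≤ i) => MeasurableSpace.generateFrom (pis i))
          k (not_lt.mp hk)) le_rfl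
  have hfix : r ⁻¹' B = B := by
    ext x
    have hfin : {k | r x k ≠ x k}.Finite := by
      refine (Set.finite_Iio n).subset fun k hk => ?_
      simp only [mem_setOf_eq, hrdef] at hk
      by_contra hkn
      simp only [Set.mem_Iio, not_lt] at hkn
      exact hk (by simp [Nat.not_lt.mpr hkn])
    exact hinv _ _ hfin
  have := hr hB
  rwa [hfix] at this

lemma tail_zero_one {B : Set (ℕ → Bool)} (hB : MeasurableSet B)
    (hinv : ∀ x y : ℕ → Bool, {k | x k ≠ y k}.Finite → (x ∈ B ↔ y ∈ B)) :
    mu0 B = 0 ∨ mu0 B = 1 := by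
  refine measure_zero_or_one_of_measurableSet_limsup_atTop
    (fun i => MeasurableSpace.generateFrom_le ?_) iIndep_coords ?_
  · rintro S ⟨c, rfl⟩
    exact measurable_pi_apply (X := fun _ : ℕ => Bool) i (measurableSet_singleton c)
  · rw [limsup_eq_iInf_iSup_of_nat]
    rw [MeasurableSpace.measurableSet_iInf]
    intro n
    exact tail_meas n hB hinv

lemma singleton_measure_zero (w : ℕ → Bool) : mu0 {w} = 0 := by
  have hle : ∀ n : ℕ, mu0 {w} ≤ 2⁻¹ ^ n := by
    intro n
    have hsub : {w} ⊆ cyl (Finset.range n) w := by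
      rintro x rfl; intro i _; rfl
    calc mu0 {w} ≤ mu0 (cyl (Finset.range n) w) := measure_mono hsub
      _ = 2⁻¹ ^ n := by rw [cyl_measure, Finset.card_range]
  have htend : Tendsto (fun n : ℕ => (2⁻¹ : ℝ≥0∞) ^ n) atTop (nhds 0) :=
    ENNReal.tendsto_pow_atTop_nhds_zero_of_lt_one
      (ENNReal.inv_lt_one.mpr ENNReal.one_lt_two)
  have := ge_of_tendsto htend (Filter.Eventually.of_forall hle)
  exact le_antisymm this zero_le

instance : NullSingletonClass mu0 := ⟨singleton_measure_zero⟩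

end E0Erg

open MeasureTheory E0Erg in
/-- If `E₀` (eventual agreement on the Cantor space) Borel reduces to an equivalence
relation `E` on a standard Borel space `X`, then there is an `E`-ergodic,
`E`-nonatomic Borel probability measure on `X`. -/
theorem exists_ergodic_nonatomic_measure {X : Type*}
    [MeasurableSpace X] [StandardBorelSpace X]
    (E : X → X → Prop) (hE : Equivalence E)
    (f : (ℕ → Bool) → X) (hf : Measurable f)
    (hred : ∀ x y : ℕ → Bool, {n : ℕ | x n ≠ y n}.Finite ↔ E (f x) (f y)) :
    ∃ μ : MeasureTheory.Measure X, MeasureTheory.IsProbabilityMeasure μ ∧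
      (∀ A : Set X, MeasurableSet A → (∀ x y : X, E x y → (x ∈ A ↔ y ∈ A)) →
        μ A = 0 ∨ μ A = 1) ∧
      (∀ x : X, MeasurableSet {y : X | E y x} → μ {y : X | E y x} = 0) := by
  refine ⟨mu0.map f, Measure.isProbabilityMeasure_map hf.aemeasurable, ?_, ?_⟩
  · intro A hA hAinv
    rw [Measure.map_apply hf hA]
    refine tail_zero_one (hf hA) fun x y hfin => ?_
    exact hAinv (f x) (f y) ((hred x y).mp hfin)
  · intro x hS
    rw [Measure.map_apply hf hS]
    rcases Set.eq_empty_or_nonempty (f ⁻¹' {y | E y x}) with h | ⟨w₀, hw₀⟩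
    · rw [h]; exact measure_empty
    · have hw₀' : E (f w₀) x := hw₀
      have hclass : f ⁻¹' {y | E y x} = {w | {n | w n ≠ w₀ n}.Finite} := by
        ext w
        simp only [mem_preimage, mem_setOf_eq]
        constructor
        · intro h
          exact (hred w w₀).mpr (hE.trans h (hE.symm hw₀'))
        · intro h
          exact hE.trans ((hred w w₀).mp h) hw₀'
      rw [hclass]
      have hcount : {w : ℕ → Bool | {n | w n ≠ w₀ n}.Finite}.Countable := by
        have hcover : {w : ℕ → Bool | {n | w n ≠ w₀ n}.Finite}
            ⊆ ⋃ s : Finset ℕ, {w : ℕ → Bool | ∀ n, n ∉ s → w n = w₀ n} := by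
          intro w hw
          refine Set.mem_iUnion.mpr ⟨hw.toFinset, fun n hn => ?_⟩
          by_contra hne
          exact hn (hw.mem_toFinset.mpr hne)
        refine Set.Countable.mono hcover (Set.countable_iUnion fun s => ?_)
        have : Finite {w : ℕ → Bool | ∀ n, n ∉ s → w n = w₀ n} := by
          refine Finite.of_injective
            (fun w => (fun i : s => w.1 i : s → Bool)) ?_
          intro w w' hww'
          ext n
          by_cases hn : n ∈ s
          · exact congrFun hww' ⟨n, hn⟩
          · rw [w.2 n hn, w'.2 n hn]
        exact (Set.toFinite _).countable
      exact hcount.measure_zero mu0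
end
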